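/- arXiv:0712.3584 — 8 statements merged into one kernel-verified Lean document; each statement's English description precedes it below -/
import Mathlib

section
/- Let τ be an indeterminate, and let L, p, k be integers with p ≥ 1, k ≥ 1 and k' := L − 2p − k ≥ 1. Define the (p+1)×(p+1) matrix U by: U_{ℓ,1} = (−1)^{ℓ−1}·τ^{2(p+1−ℓ)} for 1 ≤ ℓ ≤ p+1, and U_{ℓ,m+1} = Σ_{r≥0} C(ℓ+k−1, 2m−ℓ−r)·C(m+k'−1, r)·τ^{2r} for 1 ≤ ℓ ≤ p+1 and 1 ≤ m ≤ p. Then det U = T(L,p,k) in ℤ[τ]. -/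
open Polynomial Finset

/-- Binomial coefficient `C(a,b)` for integer arguments, equal to `0` if `b < 0` or `b > a`
    (for `a ≥ 0`). -/
def intChoose (a b : ℤ) : ℤ := if 0 ≤ b then (a.toNat.choose b.toNat : ℤ) else 0

/-- `T(L,p,k)`: the determinant of the `p × p` matrix whose `(ℓ,m)` entry (`1 ≤ ℓ, m ≤ p`) is
    `∑_{r=0}^{2p} C(ℓ+k-1, r-ℓ) C(m+L-2p-k, 2m-r) τ^{2(2m-r)}`, as a polynomial in `τ`. -/
noncomputable def Tpoly (L p k : ℤ) : Polynomial ℤ :=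
  Matrix.det (Matrix.of fun ℓ m : Fin p.toNat =>
    ∑ r ∈ Finset.range (2 * p.toNat + 1),
      Polynomial.C (intChoose ((ℓ : ℤ) + 1 + k - 1) ((r : ℤ) - ((ℓ : ℤ) + 1)) *
          intChoose (((m : ℤ) + 1) + L - 2 * p - k) (2 * ((m : ℤ) + 1) - (r : ℤ))) *
        Polynomial.X ^ (2 * (2 * ((m : ℤ) + 1) - (r : ℤ))).toNat)

/-- The `(p+1) × (p+1)` matrix `U`: its first column is `U_{ℓ,1} = (-1)^{ℓ-1} τ^{2(p+1-ℓ)}`,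
    and for `1 ≤ m ≤ p`,
    `U_{ℓ,m+1} = ∑_{r ≥ 0} C(ℓ+k-1, 2m-ℓ-r) C(m+k'-1, r) τ^{2r}` with `k' = L-2p-k`. -/
noncomputable def Umatrix (L p k : ℤ) :
    Matrix (Fin (p.toNat + 1)) (Fin (p.toNat + 1)) (Polynomial ℤ) :=
  Matrix.of fun ℓ m =>
    if (m : ℕ) = 0 then
      (-1) ^ (ℓ : ℕ) * Polynomial.X ^ (2 * (p.toNat - (ℓ : ℕ)))
    else
      ∑ r ∈ Finset.range (2 * p.toNat + 1),
        Polynomial.C (intChoose ((ℓ : ℤ) + 1 + k - 1)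
              (2 * (m : ℤ) - ((ℓ : ℤ) + 1) - (r : ℤ)) *
            intChoose ((m : ℤ) + (L - 2 * p - k) - 1) (r : ℤ)) *
          Polynomial.X ^ (2 * r)


lemma intChoose_neg {a b : ℤ} (hb : b < 0) : intChoose a b = 0 := if_neg (by omega)

lemma intChoose_zero_of_lt {a b : ℤ} (ha : 0 ≤ a) (h : a < b) : intChoose a b = 0 := by
  unfold intChoose
  rw [if_pos (by omega), Nat.choose_eq_zero_of_lt (by omega)]
  simp

lemma intChoose_pascal {a : ℤ} (ha : 0 ≤ a) (b : ℤ) :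
    intChoose (a + 1) b = intChoose a b + intChoose a (b - 1) := by
  rcases lt_trichotomy b 0 with h | h | h
  · rw [intChoose_neg h, intChoose_neg h, intChoose_neg (by omega)]; ring
  · subst h
    unfold intChoose
    rw [if_pos le_rfl, if_pos le_rfl, if_neg (by omega)]
    simp
  · unfold intChoose
    rw [if_pos (by omega), if_pos (by omega), if_pos (by omega)]
    have h1 : (a + 1).toNat = a.toNat + 1 := by omega
    have h2 : b.toNat = (b - 1).toNat + 1 := by omega
    rw [h1, h2, Nat.choose_succ_succ]
    push_cast; ring

lemma key_identity {A B : ℤ} (hA : 0 ≤ A) (hB : 0 ≤ B) (c r : ℤ) :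
    intChoose A c * intChoose B r + intChoose (A + 1) c * intChoose B (r - 1)
    = intChoose A c * intChoose (B + 1) r + intChoose A (c - 1) * intChoose B (r - 1) := by
  rw [intChoose_pascal hA, intChoose_pascal hB]; ring

noncomputable def Uent (k k' : ℤ) (n : ℕ) (L M : ℤ) : Polynomial ℤ :=
  ∑ r ∈ Finset.range (2 * n + 1),
    C (intChoose (L + k - 1) (2 * M - L - (r : ℤ)) * intChoose (M + k' - 1) (r : ℤ)) * X ^ (2 * r)

noncomputable def Sent (k k' : ℤ) (n : ℕ) (L M : ℤ) : Polynomial ℤ :=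
  ∑ r ∈ Finset.range (2 * n + 1),
    C (intChoose (L + k - 1) (2 * M - L - (r : ℤ)) * intChoose (M + k') (r : ℤ)) * X ^ (2 * r)

lemma sum_ext {N : ℕ} (f : ℕ → Polynomial ℤ) (h : f N = 0) :
    ∑ r ∈ Finset.range N, f r = ∑ r ∈ Finset.range (N + 1), f r := by
  rw [Finset.sum_range_succ, h, add_zero]

lemma shift {N : ℕ} (g h : ℕ → ℤ) (h0 : h 0 = 0) (hs : ∀ r, h (r + 1) = g r) :
    X ^ 2 * ∑ r ∈ Finset.range N, C (g r) * X ^ (2 * r)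
    = ∑ r ∈ Finset.range (N + 1), C (h r) * X ^ (2 * r) := by
  rw [Finset.sum_range_succ', h0, Finset.mul_sum]
  simp only [hs, map_zero, zero_mul, add_zero]
  apply Finset.sum_congr rfl
  intro r _
  ring

lemma entry_key (k k' : ℤ) (hk : 1 ≤ k) (hk' : 1 ≤ k') (n : ℕ) (L M : ℤ)
    (hL : 1 ≤ L) (hM : 1 ≤ M) (hMn : M ≤ (n : ℤ)) :
    Uent k k' n L M + X ^ 2 * Uent k k' n (L + 1) M
    = Sent k k' n L M + X ^ 2 * Sent k k' n L (M - 1) := by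
  have hA : (0:ℤ) ≤ L + k - 1 := by omega
  have hB : (0:ℤ) ≤ M + k' - 1 := by omega
  have e1 : Uent k k' n L M = ∑ r ∈ Finset.range (2 * n + 1 + 1),
      C (intChoose (L + k - 1) (2 * M - L - (r : ℤ)) * intChoose (M + k' - 1) (r : ℤ))
        * X ^ (2 * r) := by
    rw [Uent]
    apply sum_ext
    rw [intChoose_neg (a := L + k - 1) (by push_cast; omega), zero_mul, map_zero, zero_mul]
  have e2 : X ^ 2 * Uent k k' n (L + 1) M = ∑ r ∈ Finset.range (2 * n + 1 + 1),
      C (intChoose (L + k - 1 + 1) (2 * M - L - (r : ℤ)) * intChoose (M + k' - 1) ((r : ℤ) - 1))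
        * X ^ (2 * r) := by
    rw [Uent]
    apply shift
    · rw [intChoose_neg (a := M + k' - 1) (by norm_num), mul_zero]
    · intro r
      congr 1
      · congr 1 <;> push_cast <;> try ring
      · congr 1; push_cast; try ring
  have e3 : Sent k k' n L M = ∑ r ∈ Finset.range (2 * n + 1 + 1),
      C (intChoose (L + k - 1) (2 * M - L - (r : ℤ)) * intChoose (M + k' - 1 + 1) (r : ℤ))
        * X ^ (2 * r) := by
    rw [Sent]
    rw [show M + k' - 1 + 1 = M + k' by ring]
    apply sum_ext
    rw [intChoose_neg (a := L + k - 1) (by push_cast; omega), zero_mul, map_zero, zero_mul]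
  have e4 : X ^ 2 * Sent k k' n L (M - 1) = ∑ r ∈ Finset.range (2 * n + 1 + 1),
      C (intChoose (L + k - 1) (2 * M - L - (r : ℤ) - 1) * intChoose (M + k' - 1) ((r : ℤ) - 1))
        * X ^ (2 * r) := by
    rw [Sent]
    apply shift
    · rw [intChoose_neg (a := M + k' - 1) (by norm_num), mul_zero]
    · intro r
      congr 1
      · congr 1 <;> push_cast <;> try ring
      · congr 1 <;> push_cast <;> try ring
  rw [e1, e2, e3, e4, ← Finset.sum_add_distrib, ← Finset.sum_add_distrib]
  apply Finset.sum_congr rfl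
  intro r _
  rw [← add_mul, ← add_mul, ← map_add, ← map_add, key_identity hA hB]

lemma entry_reindex (a b L : ℤ) (hL : 1 ≤ L) {n Mn : ℕ} (hMn : Mn ≤ n) :
    ∑ r ∈ Finset.range (2 * n + 1),
      C (intChoose a ((r : ℤ) - L) * intChoose b (2 * (Mn : ℤ) - (r : ℤ)))
        * X ^ ((2 * (2 * (Mn : ℤ) - (r : ℤ))).toNat)
    = ∑ r ∈ Finset.range (2 * n + 1),
      C (intChoose a (2 * (Mn : ℤ) - L - (r : ℤ)) * intChoose b (r : ℤ)) * X ^ (2 * r) := by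
  have hsub : Finset.range (2 * Mn + 1) ⊆ Finset.range (2 * n + 1) :=
    Finset.range_subset_range.mpr (by omega)
  have h1 : ∑ r ∈ Finset.range (2 * n + 1),
      C (intChoose a ((r : ℤ) - L) * intChoose b (2 * (Mn : ℤ) - (r : ℤ)))
        * X ^ ((2 * (2 * (Mn : ℤ) - (r : ℤ))).toNat)
      = ∑ r ∈ Finset.range (2 * Mn + 1),
      C (intChoose a ((r : ℤ) - L) * intChoose b (2 * (Mn : ℤ) - (r : ℤ)))
        * X ^ ((2 * (2 * (Mn : ℤ) - (r : ℤ))).toNat) := by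
    refine (Finset.sum_subset hsub ?_).symm
    intro x hx hnx
    simp only [Finset.mem_range] at hx hnx
    rw [intChoose_neg (a := b) (by omega), mul_zero, map_zero, zero_mul]
  have h2 : ∑ r ∈ Finset.range (2 * n + 1),
      C (intChoose a (2 * (Mn : ℤ) - L - (r : ℤ)) * intChoose b (r : ℤ)) * X ^ (2 * r)
      = ∑ r ∈ Finset.range (2 * Mn + 1),
      C (intChoose a (2 * (Mn : ℤ) - L - (r : ℤ)) * intChoose b (r : ℤ)) * X ^ (2 * r) := by
    refine (Finset.sum_subset hsub ?_).symm
    intro x hx hnx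
    simp only [Finset.mem_range] at hx hnx
    rw [intChoose_neg (a := a) (by omega), zero_mul, map_zero, zero_mul]
  rw [h1, h2]
  rw [← Finset.sum_range_reflect]
  apply Finset.sum_congr rfl
  intro j hj
  simp only [Finset.mem_range] at hj
  have e1 : 2 * Mn + 1 - 1 - j = 2 * Mn - j := by omega
  rw [e1]
  have e2 : ((2 * Mn - j : ℕ) : ℤ) = 2 * (Mn : ℤ) - (j : ℤ) := by omega
  rw [e2]
  have e3 : 2 * (Mn : ℤ) - ((j : ℤ)) - L = 2 * (Mn : ℤ) - L - (j : ℤ) := by ring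
  have e4 : 2 * (Mn : ℤ) - (2 * (Mn : ℤ) - (j : ℤ)) = (j : ℤ) := by ring
  rw [e4]
  rw [show (2 * (Mn : ℤ) - (j:ℤ)) - L = 2 * (Mn : ℤ) - L - (j : ℤ) from by ring]
  rw [show ((2 : ℤ) * (j : ℕ)).toNat = 2 * j from by omega]

noncomputable def Bmat (n : ℕ) : Matrix (Fin n) (Fin n) (Polynomial ℤ) :=
  Matrix.of fun i j => if i = j then 1 else if (i : ℕ) + 1 = (j : ℕ) then X ^ 2 else 0

lemma det_Bmat (n : ℕ) : (Bmat n).det = 1 := by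
  rw [Matrix.det_of_upperTriangular]
  · simp [Bmat]
  · intro i j hij
    simp only [Bmat, Matrix.of_apply, id_eq] at *
    rw [if_neg (by exact fun h => absurd h (by exact Fin.ne_of_gt hij)),
      if_neg (by have := hij; rw [Fin.lt_def] at this; omega)]

lemma mul_Bmat_last {n : ℕ} (M : Matrix (Fin (n + 1)) (Fin (n + 1)) (Polynomial ℤ))
    (j : Fin (n + 1)) :
    (Bmat (n + 1) * M) (Fin.last n) j = M (Fin.last n) j := by
  rw [Matrix.mul_apply, Finset.sum_eq_single (Fin.last n)]
  · simp [Bmat]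
  · intro l _ hl
    have h2 : ¬ (n + 1 = (l : ℕ)) := by have := l.isLt; omega
    simp only [Bmat, Matrix.of_apply, Fin.val_last]
    rw [if_neg (fun h => hl h.symm), if_neg h2, zero_mul]
  · simp

lemma mul_Bmat_castSucc {n : ℕ} (M : Matrix (Fin (n + 1)) (Fin (n + 1)) (Polynomial ℤ))
    (i : Fin n) (j : Fin (n + 1)) :
    (Bmat (n + 1) * M) i.castSucc j = M i.castSucc j + X ^ 2 * M i.succ j := by
  rw [Matrix.mul_apply]
  have key : ∀ l : Fin (n + 1), Bmat (n + 1) i.castSucc l * M l j =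
      (if l = i.castSucc then M i.castSucc j else 0)
      + (if l = i.succ then X ^ 2 * M i.succ j else 0) := by
    intro l
    by_cases h1 : l = i.castSucc
    · subst h1
      rw [if_pos rfl, if_neg (Fin.castSucc_lt_succ : i.castSucc < i.succ).ne]
      simp [Bmat]
    · by_cases h2 : l = i.succ
      · subst h2
        rw [if_neg h1, if_pos rfl]
        have : Bmat (n + 1) i.castSucc i.succ = X ^ 2 := by
          simp only [Bmat, Matrix.of_apply]
          rw [if_neg (Fin.castSucc_lt_succ : i.castSucc < i.succ).ne, if_pos (by simp)]
        rw [this, zero_add, mul_comm]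
      · rw [if_neg h1, if_neg h2]
        have : Bmat (n + 1) i.castSucc l = 0 := by
          simp only [Bmat, Matrix.of_apply]
          rw [if_neg (fun h => h1 h.symm), if_neg (by
            intro h
            apply h2
            apply Fin.ext
            simp only [Fin.val_succ]
            simp only [Fin.coe_castSucc] at h
            omega)]
        rw [this, zero_mul, add_zero]
  rw [Finset.sum_congr rfl (fun l _ => key l), Finset.sum_add_distrib,
    Finset.sum_ite_eq', Finset.sum_ite_eq']
  simp

lemma mul_Bmat_col {n : ℕ} (M : Matrix (Fin n) (Fin n) (Polynomial ℤ)) (i m : Fin n)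
    (hm : 0 < (m : ℕ)) :
    (M * Bmat n) i m = M i m + X ^ 2 * M i ⟨(m : ℕ) - 1, by omega⟩ := by
  rw [Matrix.mul_apply]
  set m' : Fin n := ⟨(m : ℕ) - 1, by omega⟩ with hm'
  have hne : m' ≠ m := by
    intro h
    have h' : (m : ℕ) - 1 = (m : ℕ) := congrArg Fin.val h
    omega
  have key : ∀ l : Fin n, M i l * Bmat n l m =
      (if l = m then M i m else 0) + (if l = m' then X ^ 2 * M i m' else 0) := by
    intro l
    by_cases h1 : l = m
    · subst h1
      rw [if_pos rfl, if_neg (fun h => hne (h.symm))]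
      simp [Bmat]
    · by_cases h2 : l = m'
      · subst h2
        rw [if_neg h1, if_pos rfl]
        have : Bmat n m' m = X ^ 2 := by
          simp only [Bmat, Matrix.of_apply]
          rw [if_neg hne, if_pos (show (m : ℕ) - 1 + 1 = (m : ℕ) by omega)]
        rw [this, zero_add, mul_comm]
      · rw [if_neg h1, if_neg h2]
        have : Bmat n l m = 0 := by
          simp only [Bmat, Matrix.of_apply]
          rw [if_neg h1, if_neg (by
            intro h
            exact h2 (Fin.ext (show (l : ℕ) = (m : ℕ) - 1 by omega)))]
        rw [this, mul_zero, add_zero]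
  rw [Finset.sum_congr rfl (fun l _ => key l), Finset.sum_add_distrib,
    Finset.sum_ite_eq', Finset.sum_ite_eq']
  simp

lemma mul_Bmat_col0 {n : ℕ} (M : Matrix (Fin n) (Fin n) (Polynomial ℤ)) (i m : Fin n)
    (hm : (m : ℕ) = 0) :
    (M * Bmat n) i m = M i m := by
  rw [Matrix.mul_apply, Finset.sum_eq_single m]
  · simp [Bmat]
  · intro l _ hl
    have : Bmat n l m = 0 := by
      simp only [Bmat, Matrix.of_apply]
      rw [if_neg hl, if_neg (by omega)]
    rw [this, mul_zero]
  · simp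


lemma Sent_nonpos (k k' : ℤ) (n : ℕ) (L M : ℤ) (hL : 1 ≤ L) (hM : M ≤ 0) :
    Sent k k' n L M = 0 := by
  rw [Sent]
  apply Finset.sum_eq_zero
  intro r _
  rw [intChoose_neg (a := L + k - 1) (by omega), zero_mul, map_zero, zero_mul]

lemma T_entry (a b L : ℤ) (hL : 1 ≤ L) {n m : ℕ} (hm : m < n) :
    ∑ r ∈ Finset.range (2 * n + 1),
      C (intChoose a ((r : ℤ) - L) * intChoose b (2 * ((m : ℤ) + 1) - (r : ℤ)))
        * X ^ ((2 * (2 * ((m : ℤ) + 1) - (r : ℤ))).toNat)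
    = ∑ r ∈ Finset.range (2 * n + 1),
      C (intChoose a (2 * ((m : ℤ) + 1) - L - (r : ℤ)) * intChoose b (r : ℤ)) * X ^ (2 * r) := by
  have h := entry_reindex a b L hL (n := n) (Mn := m + 1) (by omega)
  push_cast at h
  exact h

/-- Lemma 3 of the paper: `det U = T(L,p,k)`. -/
theorem det_Umatrix_eq_Tpoly (L p k : ℤ) (hp : 1 ≤ p) (hk : 1 ≤ k)
    (hk' : 1 ≤ L - 2 * p - k) :
    (Umatrix L p k).det = Tpoly L p k := by
  set n := p.toNat with hn
  have hpn : (p : ℤ) = (n : ℤ) := by omega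
  -- Step 1: multiply by the unitriangular matrix `Bmat (n+1)` on the left.
  have step1 : (Umatrix L p k).det = (Bmat (n + 1) * Umatrix L p k).det := by
    rw [Matrix.det_mul, det_Bmat, one_mul]
  -- entries of U in terms of Uent
  have hUc : ∀ (ℓ : Fin (n + 1)) (m : Fin n),
      Umatrix L p k ℓ m.succ = Uent k (L - 2 * p - k) n ((ℓ : ℤ) + 1) ((m : ℤ) + 1) := by
    intro ℓ m
    simp only [Umatrix, Matrix.of_apply, Uent]
    rw [if_neg (by simp [Fin.val_succ])]
    simp only [Fin.val_succ, Nat.cast_add, Nat.cast_one]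
    rfl
  -- first column of B * U
  have col0 : ∀ i : Fin (n + 1), i ≠ Fin.last n →
      (Bmat (n + 1) * Umatrix L p k) i 0 = 0 := by
    intro i hi
    have hilt : (i : ℕ) < n := by
      rcases Fin.lt_last_iff_ne_last.mpr hi with h
      simpa [Fin.lt_def, Fin.val_last] using h
    set j : Fin n := ⟨(i : ℕ), hilt⟩ with hj
    have hij : i = j.castSucc := by apply Fin.ext; simp [hj]
    rw [hij, mul_Bmat_castSucc]
    have hU0 : ∀ (l : Fin (n + 1)), Umatrix L p k l 0 =
        (-1) ^ (l : ℕ) * X ^ (2 * (n - (l : ℕ))) := by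
      intro l
      simp only [Umatrix, Matrix.of_apply]
      rw [if_pos (by simp)]
    rw [hU0, hU0]
    simp only [Fin.coe_castSucc, Fin.val_succ]
    have he : 2 * (n - (j : ℕ)) = 2 + 2 * (n - ((j : ℕ) + 1)) := by
      have := j.isLt; omega
    rw [he, pow_add, pow_succ]
    ring
  -- Step 2: Laplace expansion along the first column.
  rw [step1, Matrix.det_succ_column_zero, Finset.sum_eq_single (Fin.last n)]
  rotate_left
  · intro i _ hi
    rw [col0 i hi, mul_zero, zero_mul]
  · intro h
    exact absurd (Finset.mem_univ _) h
  -- evaluate the last-row entry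
  have hlast : (Bmat (n + 1) * Umatrix L p k) (Fin.last n) 0 = (-1) ^ n := by
    rw [mul_Bmat_last]
    simp only [Umatrix, Matrix.of_apply]
    rw [if_pos (by simp)]
    simp [Fin.val_last]
    simp [← hn]
  rw [hlast, Fin.val_last, Fin.succAbove_last]
  have hsign : ((-1 : Polynomial ℤ) ^ n * (-1) ^ n) = 1 := by
    rw [← pow_add]
    exact Even.neg_one_pow ⟨n, by ring⟩
  rw [hsign, one_mul]
  -- Step 3: the remaining minor equals Smat * Bmat n.
  have hminor : (Bmat (n + 1) * Umatrix L p k).submatrix Fin.castSucc Fin.succ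
      = (Matrix.of fun ℓ m : Fin n =>
          Sent k (L - 2 * p - k) n ((ℓ : ℤ) + 1) ((m : ℤ) + 1)) * Bmat n := by
    ext ℓ m
    rw [Matrix.submatrix_apply, mul_Bmat_castSucc, hUc, hUc]
    have hek := entry_key k (L - 2 * p - k) hk hk' n ((ℓ : ℤ) + 1) ((m : ℤ) + 1)
      (by omega) (by omega) (by have := m.isLt; omega)
    simp only [Fin.coe_castSucc, Fin.val_succ] at *
    push_cast at hek ⊢
    rw [hek]
    by_cases hm0 : (m : ℕ) = 0
    · rw [mul_Bmat_col0 _ _ _ hm0]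
      have : ((m : ℤ) + 1 - 1) = 0 := by omega
      rw [this, Sent_nonpos k (L - 2 * p - k) n ((ℓ : ℤ) + 1) 0 (by omega) le_rfl,
        mul_zero, add_zero]
      simp [Matrix.of_apply]
    · rw [mul_Bmat_col _ _ _ (by omega)]
      simp only [Matrix.of_apply]
      have harg : ((((m : ℕ) - 1 : ℕ) : ℤ) + 1) = ((m : ℕ) : ℤ) + 1 - 1 := by omega
      rw [harg]
  rw [hminor, Matrix.det_mul, det_Bmat, mul_one]
  -- Step 4: identify with Tpoly via reindexing.
  rw [Tpoly, ← hn]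
  congr 1
  refine Matrix.ext fun ℓ m => ?_
  simp only [Matrix.of_apply]
  rw [show ((m : ℤ) + 1) + L - 2 * p - k = ((m : ℤ) + 1) + (L - 2 * p - k) from by ring]
  rw [T_entry ((ℓ : ℤ) + 1 + k - 1) (((m : ℤ) + 1) + (L - 2 * p - k)) ((ℓ : ℤ) + 1)
    (by omega) m.isLt]
  rw [Sent]
end

section
/- Let R be a commutative ring, n ≥ 1, and let A and B be n×n matrices over R. For 1 ≤ j ≤ n, let A⟨j⟩ denote the matrix obtained from A by replacing its n-th row with the j-th row of B, and let B⟨j⟩ denote the matrix obtained from B by replacing its j-th row with the n-th row of A. Then det A · det B = Σ_{j=1}^{n} det A⟨j⟩ · det B⟨j⟩. -/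
open Matrix

/-- A special case of the Plücker relations: exchanging the last row of `A` with each row of `B`
    in turn.  For `n×n` matrices `A`, `B` (here of size `n+1 ≥ 1`) over a commutative ring `R`:
    `det A · det B = ∑_{j} det A⟨j⟩ · det B⟨j⟩`, where `A⟨j⟩` is `A` with its last row replaced
    by the `j`-th row of `B`, and `B⟨j⟩` is `B` with its `j`-th row replaced by the last row
    of `A`. -/
theorem det_mul_det_eq_sum_rowExchange_plucker (R : Type*) [CommRing R] (n : ℕ)
    (A B : Matrix (Fin (n + 1)) (Fin (n + 1)) R) :
    A.det * B.det =
      ∑ j : Fin (n + 1),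
        (A.updateRow (Fin.last n) (B j)).det * (B.updateRow j (A (Fin.last n))).det := by
  set a := A (Fin.last n) with ha
  set L : (Fin (n + 1) → R) →ₗ[R] R :=
    (Matrix.detRowAlternating (n := Fin (n + 1)) (R := R)
      ).toMultilinearMap.toLinearMap A (Fin.last n) with hL
  have hLdet : ∀ v, (A.updateRow (Fin.last n) v).det = L v := by
    intro v
    rw [hL]
    rfl
  have hcram : ∀ j, (B.updateRow j a).det = Matrix.cramer Bᵀ a j := by
    intro j
    rw [Matrix.cramer_apply, Matrix.updateCol_transpose, Matrix.det_transpose]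
  calc A.det * B.det = B.det * L a := by
        rw [← hLdet a, ha, Matrix.updateRow_eq_self, mul_comm]
    _ = L (B.det • a) := by rw [LinearMap.map_smul, smul_eq_mul]
    _ = L (Bᵀ *ᵥ Matrix.cramer Bᵀ a) := by rw [Matrix.mulVec_cramer, Matrix.det_transpose]
    _ = L (∑ j, Matrix.cramer Bᵀ a j • B j) := by
        congr 1
        ext i
        simp [Matrix.mulVec, dotProduct, mul_comm]
    _ = ∑ j, Matrix.cramer Bᵀ a j * L (B j) := by
        rw [map_sum]; simp [smul_eq_mul]
    _ = ∑ j : Fin (n + 1),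
        (A.updateRow (Fin.last n) (B j)).det * (B.updateRow j a).det := by
        refine Finset.sum_congr rfl fun j _ => ?_
        rw [hLdet, hcram, mul_comm]
end

section
/- Let L = 2n be even, let 0 ≤ p ≤ n−1, set p̃ = n−1−p, and fix ε = (ε_1,…,ε_p) ∈ {0,1}^p. Define the non-decreasing sequence a = (a_1,…,a_n) by a_ℓ = 2ℓ + p̃ − 1 + ε_{p+1−ℓ} for 1 ≤ ℓ ≤ p and a_ℓ = ℓ + n − 1 for p+1 ≤ ℓ ≤ n. Then for every Dyck path α of length L: C_{a;α} = 1 if α ∈ 𝒟_{L,p} and, for every i with 1 ≤ i ≤ p, one has α_{L−p̃−2i−1} < α_{L−p̃−2i} if and only if ε_i = 1; and C_{a;α} = 0 in all other cases. -/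
open Finset

/-- `s_κ ∈ ℤ[τ]`: `s_0 = 0`, `s_1 = 1`, `s_{κ+1} = -τ s_κ - s_{κ-1}`. -/
noncomputable def qnum : ℕ → Polynomial ℤ
  | 0 => 0
  | 1 => 1
  | (n + 2) => -Polynomial.X * qnum (n + 1) - qnum n

/-- The position of the leftmost local maximum (peak) of a path encoded as a list of steps
    (`true` = up-step, `false` = down-step): the index `i ≥ 1` such that step `i` is an
    up-step immediately followed by a down-step. -/
def firstPeak : List Bool → Option ℕ
  | true :: false :: _ => some 1
  | _ :: rest => (firstPeak rest).map (· + 1)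
  | [] => none

/-- Remove the leftmost peak (the first adjacent up-step/down-step pair) from a list of steps. -/
def removePeak : List Bool → List Bool
  | true :: false :: rest => rest
  | x :: rest => x :: removePeak rest
  | [] => []

/-- The recursively defined coefficient `C_{a;α}` (with fuel; the fuel `steps.length` used in
    `coeffC` below is always sufficient since each recursive call shortens the path by two
    steps): `C_{∅;∅} = 1`; otherwise, with `i` the leftmost local maximum of the path and `κ`
    the number of entries of `a` equal to `i`, `C_{a;α} = s_κ · C_{a';α'}`, where `α'` is the
    path with the peak at `i` removed and `a'` is obtained from `a` by deleting one occurrence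
    of `i` and replacing each remaining entry `x` by `x` if `x < i`, by `i-1` if `x = i`, and
    by `x-2` if `x > i` (note `s_0 = 0`, so `C_{a;α} = 0` when `κ = 0`). -/
noncomputable def coeffCAux : ℕ → Multiset ℤ → List Bool → Polynomial ℤ
  | 0, _, _ => 1
  | (fuel + 1), a, steps =>
    match firstPeak steps with
    | none => 1
    | some i =>
        qnum (a.count (i : ℤ)) *
          coeffCAux fuel
            ((a.erase (i : ℤ)).map fun x =>
              if x < (i : ℤ) then x else if x = (i : ℤ) then (i : ℤ) - 1 else x - 2)
            (removePeak steps)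

/-- The coefficient `C_{a;α}` of the linear expansion of `ψ_{a_1,…,a_n}` in the components
    `ψ_α`. -/
noncomputable def coeffC (a : Multiset ℤ) (steps : List Bool) : Polynomial ℤ :=
  coeffCAux steps.length a steps

/- ======================= auxiliary lemmas ======================= -/

lemma qnum_zero : qnum 0 = 0 := rfl
lemma qnum_one : qnum 1 = 1 := rfl

lemma firstPeak_replicate (t : List Bool) : ∀ i, 1 ≤ i →
    firstPeak (List.replicate i true ++ false :: t) = some i := by
  intro i
  induction i with
  | zero => omega
  | succ k ih =>
    intro _
    rcases Nat.eq_zero_or_pos k with hk | hk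
    · subst hk; rfl
    · obtain ⟨k', rfl⟩ : ∃ k', k = k' + 1 := ⟨k - 1, by omega⟩
      have : List.replicate (k' + 1 + 1) true ++ false :: t
          = true :: true :: (List.replicate k' true ++ false :: t) := by
        simp [List.replicate_succ]
      rw [this]
      have h2 : firstPeak (true :: true :: (List.replicate k' true ++ false :: t))
          = (firstPeak (true :: (List.replicate k' true ++ false :: t))).map (· + 1) := rfl
      rw [h2]
      have h3 : true :: (List.replicate k' true ++ false :: t)
          = List.replicate (k' + 1) true ++ false :: t := by simp [List.replicate_succ]
      rw [h3, ih (by omega)]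
      rfl

lemma removePeak_replicate (t : List Bool) : ∀ i, 1 ≤ i →
    removePeak (List.replicate i true ++ false :: t) = List.replicate (i - 1) true ++ t := by
  intro i
  induction i with
  | zero => omega
  | succ k ih =>
    intro _
    rcases Nat.eq_zero_or_pos k with hk | hk
    · subst hk; rfl
    · obtain ⟨k', rfl⟩ : ∃ k', k = k' + 1 := ⟨k - 1, by omega⟩
      have : List.replicate (k' + 1 + 1) true ++ false :: t
          = true :: true :: (List.replicate k' true ++ false :: t) := by
        simp [List.replicate_succ]
      rw [this]
      have h2 : removePeak (true :: true :: (List.replicate k' true ++ false :: t))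
          = true :: removePeak (true :: (List.replicate k' true ++ false :: t)) := rfl
      rw [h2]
      have h3 : true :: (List.replicate k' true ++ false :: t)
          = List.replicate (k' + 1) true ++ false :: t := by simp [List.replicate_succ]
      rw [h3, ih (by omega)]
      simp [List.replicate_succ]

lemma removePeak_length : ∀ (s : List Bool) (i : ℕ), firstPeak s = some i →
    s.length = (removePeak s).length + 2 := by
  intro s
  induction s with
  | nil => intro i h; simp [firstPeak] at h
  | cons x rest ih =>
    intro i h
    match x, rest with
    | true, [] => simp [firstPeak] at h
    | true, false :: r => simp [removePeak]
    | true, true :: r =>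
      have h' : firstPeak (true :: true :: r) = (firstPeak (true :: r)).map (· + 1) := rfl
      rw [h'] at h
      rcases Option.map_eq_some_iff.mp h with ⟨j, hj, rfl⟩
      have := ih j hj
      have hrp : removePeak (true :: true :: r) = true :: removePeak (true :: r) := rfl
      rw [hrp]
      simpa using this
    | false, r =>
      have h' : firstPeak (false :: r) = (firstPeak r).map (· + 1) := rfl
      rw [h'] at h
      rcases Option.map_eq_some_iff.mp h with ⟨j, hj, rfl⟩
      have := ih j hj
      have hrp : removePeak (false :: r) = false :: removePeak r := rfl
      rw [hrp]
      simpa using this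

lemma coeffCAux_fuel : ∀ (f f' : ℕ) (a : Multiset ℤ) (s : List Bool),
    s.length ≤ f → s.length ≤ f' → coeffCAux f a s = coeffCAux f' a s := by
  intro f
  induction f with
  | zero =>
    intro f' a s h h'
    have : s = [] := List.length_eq_zero_iff.mp (by omega)
    subst this
    cases f' with
    | zero => rfl
    | succ g' => simp [coeffCAux, firstPeak]
  | succ g ih =>
    intro f' a s h h'
    match f', s with
    | 0, s =>
      have : s = [] := List.length_eq_zero_iff.mp (by omega)
      subst this
      simp [coeffCAux, firstPeak]
    | g' + 1, s =>
      show coeffCAux (g+1) a s = coeffCAux (g'+1) a s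
      rw [coeffCAux, coeffCAux]
      cases hfp : firstPeak s with
      | none => rfl
      | some i =>
        have hl := removePeak_length s i hfp
        simp only []
        rw [ih g' _ _ (by omega) (by omega)]

lemma coeffC_peel (a : Multiset ℤ) (s : List Bool) (i : ℕ) (h : firstPeak s = some i) :
    coeffC a s = qnum (a.count (i:ℤ)) *
      coeffC ((a.erase (i:ℤ)).map
        (fun x => if x < (i:ℤ) then x else if x = (i:ℤ) then (i:ℤ)-1 else x-2))
      (removePeak s) := by
  have hl := removePeak_length s i h
  unfold coeffC
  rw [hl]
  show coeffCAux ((removePeak s).length + 1 + 1) a s = _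
  rw [coeffCAux, h]
  show qnum (a.count (i:ℤ)) * coeffCAux ((removePeak s).length + 1) _ (removePeak s) = _
  congr 1
  exact coeffCAux_fuel ((removePeak s).length + 1) (removePeak s).length _ (removePeak s)
    (by omega) le_rfl

lemma range_map_replicate (f : ℕ → Bool) (i : ℕ) (h : ∀ j < i, f j = true) :
    (List.range i).map f = List.replicate i true := by
  rw [List.eq_replicate_iff]
  constructor
  · simp
  · intro b hb
    simp only [List.mem_map, List.mem_range] at hb
    obtain ⟨j, hj, rfl⟩ := hb
    exact h j hj

lemma range_map_split (f : ℕ → Bool) (L i : ℕ) (h : i ≤ L) :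
    (List.range L).map f = (List.range i).map f ++ (List.range (L - i)).map (fun j => f (i + j)) := by
  conv_lhs => rw [show L = i + (L - i) by omega, List.range_add]
  simp [Function.comp]

lemma range_split (N j₀ : ℕ) (hj : j₀ < N) :
    Multiset.range N = j₀ ::ₘ (Multiset.range (N-1)).map (fun k => if k < j₀ then k else k+1) := by
  have hnd : ((Multiset.range (N-1)).map (fun k => if k < j₀ then k else k+1)).Nodup := by
    refine (Multiset.nodup_range _).map_on ?_
    intro x _ y _ hxy
    split_ifs at hxy <;> omega
  have hnotmem : j₀ ∉ (Multiset.range (N-1)).map (fun k => if k < j₀ then k else k+1) := by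
    intro hmem
    obtain ⟨k, hk, hk2⟩ := Multiset.mem_map.mp hmem
    split_ifs at hk2 <;> omega
  refine ((Multiset.nodup_range N).ext (hnd.cons hnotmem)).mpr ?_
  intro x
  simp only [Multiset.mem_range, Multiset.mem_cons, Multiset.mem_map]
  constructor
  · intro hx
    by_cases hxe : x = j₀
    · exact Or.inl hxe
    · refine Or.inr ⟨if x < j₀ then x else x - 1, ?_, ?_⟩
      · split_ifs <;> omega
      · split_ifs <;> omega
  · rintro (rfl | ⟨k, hk, rfl⟩)
    · exact hj
    · split_ifs <;> omega

lemma erase_map_range (F : ℕ → ℤ) (g : ℤ → ℤ) (N j₀ : ℕ) (hj : j₀ < N + 1) :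
    (((Multiset.range (N+1)).map F).erase (F j₀)).map g =
      (Multiset.range N).map (fun k => if k < j₀ then g (F k) else g (F (k+1))) := by
  rw [range_split (N+1) j₀ hj]
  rw [Multiset.map_cons, Multiset.erase_cons_head, Multiset.map_map, Multiset.map_map]
  apply Multiset.map_congr rfl
  intro k hk
  simp only [Function.comp_apply]
  split_ifs <;> rfl

lemma cond1_equiv (α β : ℕ → ℤ) (N i ptil ptil' : ℕ)
    (hβ : ∀ k, β k = if k < i then α k else α (k+2))
    (hasc : ∀ j ≤ i, α j = (j:ℤ)) (hidown : α (i+1) = α i - 1)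
    (hiN : i ≤ N+1) (hige : ptil + 1 ≤ i)
    (hcase : ptil' = ptil ∨ (ptil = ptil' + 1 ∧ i = N+1 ∧ i = ptil+1)) :
    (∀ k ≤ 2*(N+1), min (min (k:ℤ) (((2*(N+1) : ℕ) : ℤ) - (k:ℤ))) ((ptil : ℕ) : ℤ) ≤ α k) ↔
    (∀ k ≤ 2*N, min (min (k:ℤ) (((2*N : ℕ) : ℤ) - (k:ℤ))) ((ptil' : ℕ) : ℤ) ≤ β k) := by
  constructor
  · intro hC k hk
    rw [hβ k]
    by_cases hki : k < i
    · rw [if_pos hki]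
      have := hasc k (by omega)
      omega
    · rw [if_neg hki]
      have h2 := hC (k+2) (by omega)
      rcases hcase with hc | ⟨hc1, hc2, hc3⟩ <;> omega
  · intro hC k hk
    rcases Nat.lt_or_ge k (i+1) with h | h
    · have := hasc k (by omega)
      omega
    · rcases Nat.eq_or_lt_of_le h with h1 | h1
      · have e2 := hasc i le_rfl
        rw [← h1]
        omega
      · have h2 := hC (k-2) (by omega)
        rw [hβ (k-2), if_neg (by omega), show k-2+2 = k from by omega] at h2
        rcases hcase with hc | ⟨hc1, hc2, hc3⟩ <;> omega

open Classical in
lemma key (n : ℕ) : ∀ (p ptil : ℕ), (p + ptil + 1 = n ∨ (n = 0 ∧ p = 0)) →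
    ∀ (εf : ℕ → ℕ), (∀ i, εf i ≤ 1) →
    ∀ (α : ℕ → ℤ), (∀ i < 2*n, α (i + 1) = α i + 1 ∨ α (i + 1) = α i - 1) →
    (∀ i ≤ 2*n, 0 ≤ α i) → α 0 = 0 → α (2*n) = 0 →
    coeffC
        (Multiset.map
          (fun j : ℕ =>
            if j + 1 ≤ p then ((2 * j + ptil + 1 + εf (p - j) : ℕ) : ℤ)
            else ((j + n : ℕ) : ℤ))
          (Multiset.range n))
        ((List.range (2*n)).map fun j => decide (α j < α (j + 1))) =
      if ((∀ i ≤ 2*n, min (min (i : ℤ) (((2*n : ℕ) : ℤ) - (i : ℤ))) ((ptil : ℕ) : ℤ) ≤ α i) ∧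
          ∀ i, 1 ≤ i → i ≤ p →
            (α (2*n - ptil - 2 * i - 1) < α (2*n - ptil - 2 * i) ↔ εf i = 1)) then 1 else 0 := by
  induction n with
  | zero =>
    intro p ptil hpt εf hεf α hstep hnonneg h0 hend
    obtain rfl : p = 0 := by rcases hpt with h | ⟨_, h⟩ <;> omega
    rw [if_pos]
    · simp [coeffC, coeffCAux]
    · refine ⟨?_, fun m hm1 hm2 => absurd (hm1.trans hm2) (by omega)⟩
      intro k hk
      obtain rfl : k = 0 := by omega
      rw [h0]
      simp
  | succ N ih =>
    intro p ptil hpt εf hεf α hstep hnonneg h0 hend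
    have hps : p + ptil + 1 = N + 1 := by rcases hpt with h | ⟨h, _⟩ <;> omega
    clear hpt
    -- first descent index
    have hex : ∃ k, k < 2*(N+1) ∧ α (k+1) = α k - 1 := by
      by_contra hcon
      push_neg at hcon
      have hall : ∀ k ≤ 2*(N+1), α k = k := by
        intro k
        induction k with
        | zero => intro _; simpa using h0
        | succ m ihm =>
          intro hm
          have h1 := hstep m (by omega)
          have h2 := hcon m (by omega)
          have h3 := ihm (by omega)
          rcases h1 with h1 | h1
          · rw [h1, h3]; push_cast; ring
          · exact absurd h1 h2
      have h4 := hall (2*(N+1)) le_rfl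
      rw [hend] at h4
      omega
    set i := Nat.find hex with hidef
    obtain ⟨hiL, hidown⟩ : i < 2*(N+1) ∧ α (i+1) = α i - 1 := Nat.find_spec hex
    have hup : ∀ k < i, α (k+1) = α k + 1 := by
      intro k hk
      rcases hstep k (by omega) with h | h
      · exact h
      · exact absurd (⟨by omega, h⟩ : k < 2*(N+1) ∧ α (k+1) = α k - 1) (Nat.find_min hex hk)
    have hasc : ∀ j ≤ i, α j = (j:ℤ) := by
      intro j
      induction j with
      | zero => intro _; simpa using h0
      | succ m ihm =>
        intro hm
        rw [hup m (by omega), ihm (by omega)]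
        push_cast; ring
    have hipos : 1 ≤ i := by
      by_contra hcon
      have hi0 : i = 0 := by omega
      rw [hi0] at hidown
      simp only [Nat.zero_add] at hidown
      have h1 := hnonneg 1 (by omega)
      omega
    have hLip : ∀ d k, k + d ≤ 2*(N+1) → α k - α (k+d) ≤ d := by
      intro d
      induction d with
      | zero => intro k _; simp
      | succ m ihm =>
        intro k hk
        have h1 := ihm k (by omega)
        have h2 := hstep (k+m) (by omega)
        rw [show k + (m+1) = (k+m)+1 from by omega]
        rcases h2 with h2 | h2 <;> rw [h2] <;> push_cast <;> omega
    have hiN : i ≤ N+1 := by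
      have h1 := hLip (2*(N+1) - i) i (by omega)
      rw [show i + (2*(N+1) - i) = 2*(N+1) from by omega, hend, hasc i le_rfl] at h1
      omega
    -- the step function and list shape
    set f : ℕ → Bool := fun j => decide (α j < α (j + 1)) with hf
    have hupf : ∀ j < i, f j = true := by
      intro j hj
      simp only [hf, decide_eq_true_eq]
      rw [hasc j (by omega), hasc (j+1) (by omega)]
      omega
    have hdnf : f i = false := by
      simp only [hf, decide_eq_false_iff_not]
      rw [hidown, hasc i le_rfl]
      omega
    have hsteps : (List.range (2*(N+1))).map f =
        List.replicate i true ++ false ::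
          ((List.range (2*(N+1) - i - 1)).map fun j => f (i+1+j)) := by
      rw [range_map_split f (2*(N+1)) i (by omega)]
      congr 1
      · exact range_map_replicate f i hupf
      · rw [show 2*(N+1) - i = (2*(N+1) - i - 1) + 1 from by omega, List.range_succ_eq_map]
        rw [List.map_cons, List.map_map]
        congr 1
        apply List.map_congr_left
        intro a ha
        simp only [Function.comp_apply]
        congr 1
        omega
    have hfp : firstPeak ((List.range (2*(N+1))).map f) = some i := by
      rw [hsteps]; exact firstPeak_replicate _ i hipos
    have hrp : removePeak ((List.range (2*(N+1))).map f) =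
        List.replicate (i-1) true ++ ((List.range (2*(N+1) - i - 1)).map fun j => f (i+1+j)) := by
      rw [hsteps]; exact removePeak_replicate _ i hipos
    set F : ℕ → ℤ := fun j : ℕ =>
      if j + 1 ≤ p then ((2 * j + ptil + 1 + εf (p - j) : ℕ) : ℤ)
      else ((j + (N+1) : ℕ) : ℤ) with hFdef
    have hFmono : ∀ j j', j < j' → F j < F j' := by
      intro j j' hjj
      have e1 := hεf (p - j)
      have e2 := hεf (p - j')
      simp only [hFdef]
      split_ifs <;> omega
    rw [coeffC_peel _ _ i hfp]
    by_cases hmem : ∃ j₀, j₀ < N+1 ∧ F j₀ = (i:ℤ)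
    ·
      obtain ⟨j₀, hj₀N, hFj₀⟩ := hmem
      have hnd : (Multiset.map F (Multiset.range (N+1))).Nodup := by
        refine (Multiset.nodup_range _).map_on ?_
        intro x hx y hy hxy
        by_contra hne
        rcases Nat.lt_or_ge x y with h | h
        · exact absurd hxy (ne_of_lt (hFmono x y h))
        · exact absurd hxy.symm (ne_of_lt (hFmono y x (by omega)))
      have hcnt : (Multiset.map F (Multiset.range (N+1))).count (i:ℤ) = 1 :=
        Multiset.count_eq_one_of_mem hnd
          (Multiset.mem_map.mpr ⟨j₀, Multiset.mem_range.mpr hj₀N, hFj₀⟩)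
      rw [hcnt, qnum_one, one_mul]
      rw [show ((Multiset.map F (Multiset.range (N+1))).erase (i:ℤ))
            = (Multiset.map F (Multiset.range (N+1))).erase (F j₀) from by rw [hFj₀]]
      rw [erase_map_range F
        (fun x => if x < (i:ℤ) then x else if x = (i:ℤ) then (i:ℤ)-1 else x-2) N j₀ hj₀N]
      -- the reduced path
      obtain ⟨α', hα'⟩ : ∃ α' : ℕ → ℤ, ∀ k, α' k = if k < i then α k else α (k+2) :=
        ⟨_, fun k => rfl⟩
      have hstep' : ∀ k < 2*N, α' (k+1) = α' k + 1 ∨ α' (k+1) = α' k - 1 := by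
        intro k hk
        rw [hα' (k+1), hα' k]
        by_cases h1 : k+1 < i
        · rw [if_pos h1, if_pos (by omega)]
          exact hstep k (by omega)
        · by_cases h2 : k < i
          · rw [if_neg h1, if_pos h2]
            have hs := hstep (i+1) (by omega)
            have e2 := hasc k (by omega)
            have e3 := hasc i le_rfl
            rw [show k+1+2 = i+2 from by omega]
            rw [show i+1+1 = i+2 from by omega] at hs
            rcases hs with hs | hs
            · left; omega
            · right; omega
          · rw [if_neg h1, if_neg h2, show k+1+2 = (k+2)+1 from by omega]
            exact hstep (k+2) (by omega)
      have hnonneg' : ∀ k ≤ 2*N, 0 ≤ α' k := by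
        intro k hk
        rw [hα' k]
        split_ifs
        · exact hnonneg k (by omega)
        · exact hnonneg (k+2) (by omega)
      have h0' : α' 0 = 0 := by
        rw [hα' 0, if_pos (by omega)]
        exact h0
      have hend' : α' (2*N) = 0 := by
        rw [hα' (2*N)]
        split_ifs with h
        · have h2 : 2*N = 0 := by omega
          rw [h2]
          exact h0
        · rw [show 2*N+2 = 2*(N+1) from by omega]
          exact hend
      -- the reduced steps list
      rw [hrp]
      have hsteps' : List.replicate (i-1) true ++
            ((List.range (2*(N+1) - i - 1)).map fun j => f (i+1+j))
          = (List.range (2*N)).map (fun j => decide (α' j < α' (j + 1))) := by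
        rw [range_map_split (fun j => decide (α' j < α' (j + 1))) (2*N) (i-1) (by omega)]
        congr 1
        · symm
          apply range_map_replicate
          intro j hj
          simp only [decide_eq_true_eq]
          rw [hα' j, hα' (j+1), if_pos (by omega), if_pos (by omega),
            hasc j (by omega), hasc (j+1) (by omega)]
          omega
        · rw [show 2*N - (i-1) = 2*(N+1) - i - 1 from by omega]
          apply List.map_congr_left
          intro j hj
          have hjr := List.mem_range.mp hj
          simp only [hf]
          by_cases hj0 : j = 0
          · subst hj0
            rw [hα' (i-1+0), hα' (i-1+0+1), if_pos (by omega), if_neg (by omega)]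
            rw [show i-1+0 = i-1 from by omega, show i-1+0+1+2 = i+2 from by omega,
              show i+1+0 = i+1 from by omega]
            have e1 : α (i+1) = α (i-1) := by
              have e2 := hasc (i-1) (by omega)
              have e3 := hasc i le_rfl
              omega
            rw [e1]
          · rw [hα' (i-1+j), hα' (i-1+j+1), if_neg (by omega), if_neg (by omega)]
            rw [show i-1+j+2 = i+1+j from by omega, show i-1+j+1+2 = i+1+j+1 from by omega]
      rw [hsteps']
      -- case split on low/high entry
      by_cases hj₀p : j₀ + 1 ≤ p
      · -- low entry: i = 2j₀ + ptil + 1 + εf (p - j₀)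
        have hiε := hεf (p - j₀)
        have hi_eqn : i = 2*j₀ + ptil + 1 + εf (p - j₀) := by
          have h5 : (i:ℤ) = ((2 * j₀ + ptil + 1 + εf (p - j₀) : ℕ) : ℤ) := by
            rw [← hFj₀]
            simp only [hFdef]
            rw [if_pos hj₀p]
          exact_mod_cast h5
        have hige : ptil + 1 ≤ i := by omega
        obtain ⟨εf', hεf'eq⟩ : ∃ g : ℕ → ℕ, ∀ m, g m = if m < p - j₀ then εf m else εf (m+1) :=
          ⟨_, fun m => rfl⟩
        have hεf' : ∀ m, εf' m ≤ 1 := by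
          intro m
          rw [hεf'eq m]
          split_ifs <;> apply hεf
        have hIH := ih (p-1) ptil (Or.inl (by omega)) εf' hεf' α' hstep' hnonneg' h0' hend'
        have hmap2 : (Multiset.range N).map
              (fun k => if k < j₀
                then (fun x => if x < (i:ℤ) then x else if x = (i:ℤ) then (i:ℤ)-1 else x-2) (F k)
                else (fun x => if x < (i:ℤ) then x else if x = (i:ℤ) then (i:ℤ)-1 else x-2) (F (k+1)))
            = (Multiset.range N).map (fun j : ℕ =>
                if j + 1 ≤ p-1 then ((2 * j + ptil + 1 + εf' (p-1 - j) : ℕ) : ℤ)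
                else ((j + N : ℕ) : ℤ)) := by
          apply Multiset.map_congr rfl
          intro k hk
          have hkN := Multiset.mem_range.mp hk
          by_cases h1 : k < j₀
          · rw [if_pos h1]
            have hlt : F k < (i:ℤ) := by rw [← hFj₀]; exact hFmono k j₀ h1
            simp only []
            rw [if_pos hlt]
            simp only [hFdef]
            rw [if_pos (by omega), if_pos (by omega)]
            rw [show εf' (p-1-k) = εf (p - k) from by
              rw [hεf'eq (p-1-k), if_neg (by omega), show p-1-k+1 = p-k from by omega]]
          · rw [if_neg h1]
            have hgt : (i:ℤ) < F (k+1) := by rw [← hFj₀]; exact hFmono j₀ (k+1) (by omega)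
            simp only []
            rw [if_neg (by omega), if_neg (by exact hgt.ne')]
            simp only [hFdef]
            by_cases h2 : k + 2 ≤ p
            · rw [if_pos (by omega), if_pos (by omega)]
              rw [show εf' (p-1-k) = εf (p-1-k) from by rw [hεf'eq (p-1-k), if_pos (by omega)]]
              rw [show p - (k+1) = p-1-k from by omega]
              push_cast
              omega
            · rw [if_neg (by omega), if_neg (by omega)]
              push_cast
              omega
        rw [hmap2, hIH]
        congr 1
        rw [eq_iff_iff]
        constructor
        · -- reduced condition implies full condition
          rintro ⟨hC1', hC2'⟩
          constructor
          · exact (cond1_equiv α α' N i ptil ptil hα' hasc hidown hiN hige (Or.inl rfl)).mpr hC1'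
          · intro m h1 h2
            rcases Nat.lt_trichotomy m (p - j₀) with hm | hm | hm
            · have hc := hC2' m h1 (by omega)
              rw [hεf'eq m, if_pos hm] at hc
              by_cases hq : 2*N - ptil - 2*m = i
              · simp only [hα'] at hc
                rw [if_pos (by omega), if_neg (by omega)] at hc
                rw [show 2*(N+1) - ptil - 2*m - 1 = i+1 from by omega,
                  show 2*(N+1) - ptil - 2*m = i+2 from by omega]
                rw [show 2*N - ptil - 2*m - 1 = i-1 from by omega,
                  show 2*N - ptil - 2*m + 2 = i+2 from by omega] at hc
                have e1 : α (i-1) = α (i+1) := by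
                  have e2 := hasc (i-1) (by omega)
                  have e3 := hasc i le_rfl
                  omega
                rw [e1] at hc
                exact hc
              · have hgt2 : i < 2*N - ptil - 2*m := by omega
                simp only [hα'] at hc
                rw [if_neg (by omega), if_neg (by omega)] at hc
                rw [show 2*N - ptil - 2*m - 1 + 2 = 2*(N+1) - ptil - 2*m - 1 from by omega,
                  show 2*N - ptil - 2*m + 2 = 2*(N+1) - ptil - 2*m from by omega] at hc
                exact hc
            · -- m = p - j₀ : the peak itself
              subst hm
              rcases Nat.le_one_iff_eq_zero_or_eq_one.mp (hεf (p - j₀)) with hε | hε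
              · rw [show 2*(N+1) - ptil - 2*(p-j₀) - 1 = i from by omega,
                  show 2*(N+1) - ptil - 2*(p-j₀) = i + 1 from by omega]
                have e1 := hasc i le_rfl
                constructor
                · intro h5; exfalso; omega
                · intro h5; omega
              · rw [show 2*(N+1) - ptil - 2*(p-j₀) - 1 = i - 1 from by omega,
                  show 2*(N+1) - ptil - 2*(p-j₀) = i from by omega]
                constructor
                · intro _; exact hε
                · intro _
                  have e1 := hasc (i-1) (by omega)
                  have e2 := hasc i le_rfl
                  omega
            · have hc := hC2' (m-1) (by omega) (by omega)
              rw [hεf'eq (m-1), if_neg (by omega), show m-1+1 = m from by omega] at hc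
              simp only [hα'] at hc
              rw [if_pos (by omega), if_pos (by omega)] at hc
              rw [show 2*N - ptil - 2*(m-1) - 1 = 2*(N+1) - ptil - 2*m - 1 from by omega,
                show 2*N - ptil - 2*(m-1) = 2*(N+1) - ptil - 2*m from by omega] at hc
              exact hc
        · -- full condition implies reduced condition
          rintro ⟨hC1, hC2⟩
          constructor
          · exact (cond1_equiv α α' N i ptil ptil hα' hasc hidown hiN hige (Or.inl rfl)).mp hC1
          · intro m h1 h2
            rw [hεf'eq m]
            by_cases hm : m < p - j₀
            · rw [if_pos hm]
              have hc := hC2 m h1 (by omega)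
              by_cases hq : 2*N - ptil - 2*m = i
              · simp only [hα']
                rw [if_pos (by omega), if_neg (by omega)]
                rw [show 2*(N+1) - ptil - 2*m - 1 = i+1 from by omega,
                  show 2*(N+1) - ptil - 2*m = i+2 from by omega] at hc
                rw [show 2*N - ptil - 2*m - 1 = i-1 from by omega,
                  show 2*N - ptil - 2*m + 2 = i+2 from by omega]
                have e1 : α (i-1) = α (i+1) := by
                  have e2 := hasc (i-1) (by omega)
                  have e3 := hasc i le_rfl
                  omega
                rw [e1]
                exact hc
              · have hgt2 : i < 2*N - ptil - 2*m := by omega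
                simp only [hα']
                rw [if_neg (by omega), if_neg (by omega)]
                rw [show 2*N - ptil - 2*m - 1 + 2 = 2*(N+1) - ptil - 2*m - 1 from by omega,
                  show 2*N - ptil - 2*m + 2 = 2*(N+1) - ptil - 2*m from by omega]
                exact hc
            · rw [if_neg hm]
              have hc := hC2 (m+1) (by omega) (by omega)
              simp only [hα']
              rw [if_pos (by omega), if_pos (by omega)]
              rw [show 2*N - ptil - 2*m - 1 = 2*(N+1) - ptil - 2*(m+1) - 1 from by omega,
                show 2*N - ptil - 2*m = 2*(N+1) - ptil - 2*(m+1) from by omega]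
              exact hc
      · -- high entry: p = 0, i = N+1
        have hi_eqn : i = j₀ + (N+1) := by
          have h5 : (i:ℤ) = ((j₀ + (N+1) : ℕ) : ℤ) := by
            rw [← hFj₀]
            simp only [hFdef]
            rw [if_neg hj₀p]
          exact_mod_cast h5
        have hj00 : j₀ = 0 := by omega
        have hiN1 : i = N+1 := by omega
        have hp0 : p = 0 := by omega
        have hptN : ptil = N := by omega
        have hIH := ih 0 (N-1)
          (by rcases Nat.eq_zero_or_pos N with h | h
              · exact Or.inr ⟨h, rfl⟩
              · exact Or.inl (by omega)) εf hεf α' hstep' hnonneg' h0' hend'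
        have hmap2 : (Multiset.range N).map
              (fun k => if k < j₀
                then (fun x => if x < (i:ℤ) then x else if x = (i:ℤ) then (i:ℤ)-1 else x-2) (F k)
                else (fun x => if x < (i:ℤ) then x else if x = (i:ℤ) then (i:ℤ)-1 else x-2) (F (k+1)))
            = (Multiset.range N).map (fun j : ℕ =>
                if j + 1 ≤ 0 then ((2 * j + (N-1) + 1 + εf (0 - j) : ℕ) : ℤ)
                else ((j + N : ℕ) : ℤ)) := by
          apply Multiset.map_congr rfl
          intro k hk
          have hkN := Multiset.mem_range.mp hk
          rw [if_neg (by omega)]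
          simp only [hFdef]
          rw [if_neg (by omega)]
          rw [if_neg (by push_cast; omega), if_neg (by push_cast; omega), if_neg (by omega)]
          push_cast
          omega
        rw [hmap2, hIH]
        congr 1
        rw [eq_iff_iff]
        constructor
        · rintro ⟨hC1', -⟩
          refine ⟨?_, fun m hm1 hm2 => absurd (hm1.trans hm2) (by omega)⟩
          rcases Nat.eq_zero_or_pos N with hN0 | hN1
          · intro k hk
            have h5 := hnonneg k (by omega)
            omega
          · exact (cond1_equiv α α' N i ptil (N-1) hα' hasc hidown (by omega) (by omega)
              (Or.inr ⟨by omega, by omega, by omega⟩)).mpr hC1'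
        · rintro ⟨hC1, -⟩
          refine ⟨?_, fun m hm1 hm2 => absurd (hm1.trans hm2) (by omega)⟩
          rcases Nat.eq_zero_or_pos N with hN0 | hN1
          · intro k hk
            obtain rfl : k = 0 := by omega
            rw [hα' 0, if_pos (by omega), h0]
            omega
          · exact (cond1_equiv α α' N i ptil (N-1) hα' hasc hidown (by omega) (by omega)
              (Or.inr ⟨by omega, by omega, by omega⟩)).mp hC1

    · have hcnt : (Multiset.map F (Multiset.range (N+1))).count (i:ℤ) = 0 := by
        rw [Multiset.count_eq_zero]
        intro hm
        obtain ⟨j, hj, hji⟩ := Multiset.mem_map.mp hm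
        exact hmem ⟨j, Multiset.mem_range.mp hj, hji⟩
      rw [hcnt, qnum_zero, zero_mul]
      rw [if_neg]
      rintro ⟨hC1, hC2⟩
      apply hmem
      have hige : ptil + 1 ≤ i := by
        have h2 := hC1 (i+1) (by omega)
        have e2 := hasc i le_rfl
        omega
      have htp : i - ptil - 1 ≤ p := by omega
      by_cases hpz : p = 0
      · refine ⟨0, by omega, ?_⟩
        simp only [hFdef]
        rw [if_neg (by omega)]
        omega
      · rcases Nat.even_or_odd (i - ptil - 1) with ⟨j₀, hj2⟩ | ⟨j₀, hj2⟩
        · have hc := hC2 (p - j₀) (by omega) (by omega)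
          rw [show 2*(N+1) - ptil - 2*(p-j₀) - 1 = i from by omega,
              show 2*(N+1) - ptil - 2*(p-j₀) = i+1 from by omega] at hc
          have e1 := hasc i le_rfl
          have hε : εf (p - j₀) = 0 := by
            have h5 := hεf (p - j₀)
            by_contra h7
            have h8 : εf (p - j₀) = 1 := by omega
            have h9 := hc.mpr h8
            omega
          refine ⟨j₀, by omega, ?_⟩
          simp only [hFdef]
          rw [if_pos (by omega)]
          omega
        · have hc := hC2 (p - j₀) (by omega) (by omega)
          rw [show 2*(N+1) - ptil - 2*(p-j₀) - 1 = i - 1 from by omega,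
              show 2*(N+1) - ptil - 2*(p-j₀) = i from by omega] at hc
          have hε : εf (p - j₀) = 1 := by
            apply hc.mp
            have e1 := hasc (i-1) (by omega)
            have e2 := hasc i le_rfl
            omega
          refine ⟨j₀, by omega, ?_⟩
          simp only [hFdef]
          rw [if_pos (by omega)]
          omega


open Classical in
/-- Lemma 1 of the paper. -/
theorem coeffC_eq_ite (n p ptil L : ℕ) (hn : 1 ≤ n) (hp : p + 1 ≤ n)
    (hptil : ptil = n - 1 - p) (hL : L = 2 * n)
    (εf : ℕ → ℕ) (hεf : ∀ i, εf i ≤ 1)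
    (α : ℕ → ℤ)
    (hstep : ∀ i < L, α (i + 1) = α i + 1 ∨ α (i + 1) = α i - 1)
    (hnonneg : ∀ i ≤ L, 0 ≤ α i)
    (h0 : α 0 = 0) (hend : α L = 0) :
    coeffC
        (Multiset.map
          (fun j : ℕ =>
            if j + 1 ≤ p then ((2 * j + ptil + 1 + εf (p - j) : ℕ) : ℤ)
            else ((j + n : ℕ) : ℤ))
          (Multiset.range n))
        ((List.range L).map fun j => decide (α j < α (j + 1))) =
      if ((∀ i ≤ L, min (min (i : ℤ) ((L : ℤ) - (i : ℤ))) (ptil : ℤ) ≤ α i) ∧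
          ∀ i, 1 ≤ i → i ≤ p →
            (α (L - ptil - 2 * i - 1) < α (L - ptil - 2 * i) ↔ εf i = 1)) then 1 else 0 := by
  subst hL
  exact key n p ptil (Or.inl (by omega)) εf hεf α hstep hnonneg h0 hend
end

section
/- Let L = 2n be even, let 0 ≤ p ≤ n−1, set p̃ = n−1−p, and let α ∈ 𝒟_{L,p}. For 1 ≤ i ≤ p define ε_i := (α_{L−p̃−2i} − α_{L−p̃−2i−1} + 1)/2, which lies in {0,1}. Then (−1)^{p̃} · Σ_{i=2}^{L−1} (−1)^i (α_i − Ω(L,p)_i) = 2·Σ_{i=1}^{p} ε_i; in other words, the signed-area statistic c_{α,p} = ((−1)^{p̃}/2)·Σ_{i=2}^{L−1} (−1)^i (α_i − Ω(L,p)_i) equals Σ_{i=1}^{p} ε_i. -/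
open Finset

private lemma tele_aux (g : ℕ → ℤ) : ∀ p : ℕ,
    ∑ k ∈ Finset.Icc 1 (2*p+1), (-1:ℤ)^k * g k
      = (∑ j ∈ Finset.Icc 1 p, (g (2*j) - g (2*j-1))) - g (2*p+1) := by
  intro p
  induction p with
  | zero => simp
  | succ p ih =>
    have h1 : 2*(p+1)+1 = (2*p+1+1)+1 := by ring
    rw [h1, Finset.sum_Icc_succ_top (by omega), Finset.sum_Icc_succ_top (by omega), ih,
      Finset.sum_Icc_succ_top (show 1 ≤ p+1 by omega)]
    have e1 : (-1:ℤ)^(2*p+1+1) = 1 := by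
      rw [show 2*p+1+1 = 2*(p+1) from by ring, pow_mul]; norm_num
    have e2 : (-1:ℤ)^(2*p+1+1+1) = -1 := by rw [pow_succ, e1]; norm_num
    rw [e1, e2, show 2*(p+1) = 2*p+1+1 from by ring, show 2*p+1+1-1 = 2*p+1 from by omega]
    ring

/-- The signed-area statistic identity: for `L = 2n` even, `0 ≤ p ≤ n-1`, `p̃ = n-1-p`, and a
    Dyck path `α ∈ 𝒟_{L,p}` (all local minima at height `≥ p̃`), with
    `Ω(L,p)_i = min(i, L-i, p̃ + δ_i)` (`δ_i = 0` iff `i ≡ p̃ (mod 2)`) and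
    `ε_i = (α_{L-p̃-2i} - α_{L-p̃-2i-1} + 1)/2 ∈ {0,1}`, one has
    `(-1)^p̃ ∑_{i=2}^{L-1} (-1)^i (α_i - Ω(L,p)_i) = 2 ∑_{i=1}^{p} ε_i`. -/
theorem signed_area_eq_two_mul_sum_eps (n p : ℕ) (hn : 1 ≤ n) (hp : p + 1 ≤ n)
    (L : ℕ) (hL : L = 2 * n) (ptil : ℕ) (hptil : ptil = n - 1 - p)
    (α : ℕ → ℤ)
    (hstep : ∀ i < L, α (i + 1) = α i + 1 ∨ α (i + 1) = α i - 1)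
    (hnonneg : ∀ i ≤ L, 0 ≤ α i)
    (h0 : α 0 = 0) (hend : α L = 0)
    (hD : ∀ i ≤ L, min (min (i : ℤ) ((L : ℤ) - (i : ℤ))) (ptil : ℤ) ≤ α i) :
    (-1 : ℤ) ^ ptil *
        ∑ i ∈ Finset.Icc 2 (L - 1),
          (-1 : ℤ) ^ i *
            (α i -
              min (min (i : ℤ) ((L : ℤ) - (i : ℤ)))
                ((ptil : ℤ) + (if i % 2 = ptil % 2 then 0 else 1))) =
      2 * ∑ i ∈ Finset.Icc 1 p, (α (L - ptil - 2 * i) - α (L - ptil - 2 * i - 1) + 1) / 2 := by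
  have hkey : L = 2*ptil + 2*p + 2 := by omega
  -- upper bound α i ≤ i
  have hA : ∀ i, i ≤ L → α i ≤ (i:ℤ) := by
    intro i
    induction i with
    | zero => intro _; simp [h0]
    | succ i ih =>
      intro h
      rcases hstep i (by omega) with h' | h' <;> (have := ih (by omega); push_cast; omega)
  -- upper bound α i ≤ L - i
  have hB : ∀ j, j ≤ L → α (L - j) ≤ (j:ℤ) := by
    intro j
    induction j with
    | zero => intro _; simpa using le_of_eq hend
    | succ j ih =>
      intro h
      have h1 := ih (by omega)
      have h2 := hstep (L - (j+1)) (by omega)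
      rw [show L - (j+1) + 1 = L - j from by omega] at h2
      rcases h2 with h2 | h2 <;> (push_cast; omega)
  have hA' : ∀ i, i ≤ L → α i ≤ (L:ℤ) - (i:ℤ) := by
    intro i hi
    have := hB (L - i) (by omega)
    rw [show L - (L - i) = i from by omega] at this
    omega
  -- parity
  have hPar : ∀ i, i ≤ L → (α i) % 2 = (i:ℤ) % 2 := by
    intro i
    induction i with
    | zero => intro _; simp [h0]
    | succ i ih =>
      intro h
      have := ih (by omega)
      rcases hstep i (by omega) with h' | h' <;> (push_cast; omega)
  -- the value at L - ptil - 1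
  have hlast : α (ptil + (2*p+1)) = (ptil:ℤ) + 1 := by
    have h1 := hA' (ptil + (2*p+1)) (by omega)
    have h2 := hD (ptil + (2*p+1)) (by omega)
    have h3 := hPar (ptil + (2*p+1)) (by omega)
    push_cast at h1 h2 h3 ⊢
    omega
  -- the term function
  set T : ℕ → ℤ := fun i => (-1:ℤ)^i *
      (α i - min (min (i : ℤ) ((L : ℤ) - (i : ℤ)))
        ((ptil : ℤ) + (if i % 2 = ptil % 2 then 0 else 1))) with hT
  -- vanishing of boundary terms
  have hvan : ∀ i, i ≤ L → (i ≤ ptil ∨ L - ptil ≤ i) → T i = 0 := by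
    intro i hi hcase
    have h1 := hA i hi
    have h2 := hA' i hi
    have h3 := hD i hi
    have h4 : α i - min (min (i : ℤ) ((L : ℤ) - (i : ℤ)))
        ((ptil : ℤ) + (if i % 2 = ptil % 2 then 0 else 1)) = 0 := by
      split_ifs <;> omega
    simp only [hT, h4, mul_zero]
  -- step 1: extend to Icc 1 (L-1)
  have e1 : ∑ i ∈ Finset.Icc 2 (L-1), T i = ∑ i ∈ Finset.Icc 1 (L-1), T i := by
    apply Finset.sum_subset
    · intro x hx; simp only [Finset.mem_Icc] at *; omega
    · intro x hx hx'
      simp only [Finset.mem_Icc] at hx hx'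
      have hx1 : x = 1 := by omega
      subst hx1
      have hα1 : α 1 = 1 := by
        have hs0 := hstep 0 (by omega)
        rw [zero_add, h0] at hs0
        have := hnonneg 1 (by omega)
        omega
      have h4 : α 1 - min (min ((1:ℕ) : ℤ) ((L : ℤ) - ((1:ℕ) : ℤ)))
          ((ptil : ℤ) + (if 1 % 2 = ptil % 2 then 0 else 1)) = 0 := by
        split_ifs with h <;> (push_cast; omega)
      simp only [hT, h4, mul_zero]
  -- step 2: restrict to the middle window
  have e2 : ∑ i ∈ Finset.Icc 1 (L-1), T i
      = ∑ i ∈ Finset.Icc (ptil+1) (ptil+(2*p+1)), T i := by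
    refine (Finset.sum_subset ?_ ?_).symm
    · intro x hx; simp only [Finset.mem_Icc] at *; omega
    · intro x hx hx'
      simp only [Finset.mem_Icc] at hx hx'
      exact hvan x (by omega) (by omega)
  -- step 3: reindex k = i - ptil
  have e3 : ∑ i ∈ Finset.Icc (ptil+1) (ptil+(2*p+1)), T i
      = ∑ k ∈ Finset.Icc 1 (2*p+1), T (ptil + k) := by
    rw [← Finset.map_add_left_Icc, Finset.sum_map]
    rfl
  -- the reduced summand
  set g : ℕ → ℤ := fun k => α (ptil + k) - ((ptil:ℤ) + (if k % 2 = 0 then 0 else 1))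
    with hg
  have e4 : ∀ k ∈ Finset.Icc 1 (2*p+1), T (ptil + k) = (-1:ℤ)^(ptil+k) * g k := by
    intro k hk
    simp only [Finset.mem_Icc] at hk
    have hmin : min (min (((ptil+k:ℕ)) : ℤ) ((L : ℤ) - (((ptil+k:ℕ)) : ℤ)))
        ((ptil : ℤ) + (if (ptil+k) % 2 = ptil % 2 then 0 else 1))
        = (ptil:ℤ) + (if k % 2 = 0 then 0 else 1) := by
      have hiff : ((ptil+k) % 2 = ptil % 2) ↔ (k % 2 = 0) := by omega
      rw [if_congr hiff rfl rfl]
      split_ifs <;> (push_cast; omega)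
    simp only [hT, hg, hmin]
  -- assemble the left side
  have e5 : (-1:ℤ)^ptil * ∑ k ∈ Finset.Icc 1 (2*p+1), T (ptil + k)
      = ∑ k ∈ Finset.Icc 1 (2*p+1), (-1:ℤ)^k * g k := by
    rw [Finset.sum_congr rfl e4, Finset.mul_sum]
    refine Finset.sum_congr rfl fun k _ => ?_
    have hsq : (-1:ℤ)^ptil * (-1:ℤ)^ptil = 1 := by
      rw [← pow_add]; exact Even.neg_one_pow ⟨ptil, rfl⟩
    rw [pow_add, ← mul_assoc, ← mul_assoc, hsq, one_mul]
  -- telescoping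
  have e6 : ∑ k ∈ Finset.Icc 1 (2*p+1), (-1:ℤ)^k * g k
      = ∑ j ∈ Finset.Icc 1 p, (g (2*j) - g (2*j-1)) := by
    rw [tele_aux g p]
    have : g (2*p+1) = 0 := by
      simp only [hg, hlast]
      rw [if_neg (by omega)]
      ring
    rw [this, sub_zero]
  -- each telescoped term
  have e7 : ∀ j ∈ Finset.Icc 1 p, g (2*j) - g (2*j-1)
      = α (ptil + 2*j) - α (ptil + 2*j - 1) + 1 := by
    intro j hj
    simp only [Finset.mem_Icc] at hj
    simp only [hg]
    rw [if_pos (by omega), if_neg (by omega),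
      show ptil + (2*j-1) = ptil + 2*j - 1 from by omega]
    ring
  -- right side: remove the division
  have e8 : ∀ i ∈ Finset.Icc 1 p,
      2 * ((α (L - ptil - 2*i) - α (L - ptil - 2*i - 1) + 1) / 2)
        = α (ptil + 2*(p+1-i)) - α (ptil + 2*(p+1-i) - 1) + 1 := by
    intro i hi
    simp only [Finset.mem_Icc] at hi
    have hidx : L - ptil - 2*i = ptil + 2*(p+1-i) := by omega
    rw [hidx]
    have hb : ptil + 2*(p+1-i) - 1 + 1 = ptil + 2*(p+1-i) := by omega
    have hs := hstep (ptil + 2*(p+1-i) - 1) (by omega)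
    rw [hb] at hs
    rcases hs with hs | hs <;> omega
  -- reindex the right side
  have e9 : ∑ i ∈ Finset.Icc 1 p, (α (ptil + 2*(p+1-i)) - α (ptil + 2*(p+1-i) - 1) + 1)
      = ∑ j ∈ Finset.Icc 1 p, (α (ptil + 2*j) - α (ptil + 2*j - 1) + 1) := by
    refine Finset.sum_nbij' (fun i => p+1-i) (fun j => p+1-j) ?_ ?_ ?_ ?_ ?_ <;>
      (intro a ha; simp only [Finset.mem_Icc] at *) <;> omega
  calc (-1 : ℤ) ^ ptil * ∑ i ∈ Finset.Icc 2 (L - 1), T i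
      = ∑ k ∈ Finset.Icc 1 (2*p+1), (-1:ℤ)^k * g k := by rw [e1, e2, e3, e5]
    _ = ∑ j ∈ Finset.Icc 1 p, (α (ptil + 2*j) - α (ptil + 2*j - 1) + 1) := by
        rw [e6]; exact Finset.sum_congr rfl e7
    _ = ∑ i ∈ Finset.Icc 1 p, (α (ptil + 2*(p+1-i)) - α (ptil + 2*(p+1-i) - 1) + 1) := e9.symm
    _ = ∑ i ∈ Finset.Icc 1 p, 2 * ((α (L - ptil - 2*i) - α (L - ptil - 2*i - 1) + 1) / 2) :=
        (Finset.sum_congr rfl e8).symm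
    _ = 2 * ∑ i ∈ Finset.Icc 1 p, (α (L - ptil - 2*i) - α (L - ptil - 2*i - 1) + 1) / 2 :=
        (Finset.mul_sum _ _ _).symm
end

section
/- Let τ be an indeterminate and work with Laurent polynomials in u over ℤ[τ, τ^{−1}]. For all integers ℓ ≥ 1, m ≥ 1 and p̃ ≥ 1, the coefficient of u^0 (constant term) in (1 + τ^{−1}·u) · u^{ℓ−m+p̃} · (τ + u)^{ℓ+p̃−1} · (τ + u^{−1})^{m+p̃} equals Σ_{r=ℓ}^{2m} τ^{p̃+2m+2ℓ−2r−1} · C(ℓ+p̃, r−ℓ) · C(m+p̃, 2m−r), where negative powers of τ are interpreted in ℤ[τ, τ^{−1}]. -/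
open LaurentPolynomial Finset

lemma helperT (c1 c2 : ℕ) (e1 e2 e : ℤ) (h : e1 + e2 = e) :
    (T e1 * (c1 : LaurentPolynomial ℤ)) * (T e2 * (c2 : LaurentPolynomial ℤ))
      = LaurentPolynomial.C ((c1 : ℤ) * (c2 : ℤ)) * T e := by
  rw [← h, T_add, map_mul, map_natCast, map_natCast]; ring

lemma helperT2 (c : ℤ) (e e' : ℤ) (h : e - 1 = e') :
    (T (-1) : LaurentPolynomial ℤ) * (LaurentPolynomial.C c * T e)
      = LaurentPolynomial.C c * T e' := by
  rw [← h, T_sub]; ring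

lemma coeff_CT_add_X_pow (a i : ℕ) :
    ((Polynomial.C (T 1 : LaurentPolynomial ℤ) + Polynomial.X) ^ a).coeff i
      = T ((a - i : ℕ) : ℤ) * (a.choose i : LaurentPolynomial ℤ) := by
  rw [add_comm, Polynomial.coeff_X_add_C_pow, T_pow, mul_one]

lemma coeff_one_add_CT_mul_X_pow (b j : ℕ) :
    ((1 + Polynomial.C (T 1 : LaurentPolynomial ℤ) * Polynomial.X) ^ b).coeff j
      = T (j : ℤ) * (b.choose j : LaurentPolynomial ℤ) := by
  have h1 : (1 + Polynomial.C (T 1 : LaurentPolynomial ℤ) * Polynomial.X)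
      = Polynomial.C (T 1) * (Polynomial.X + Polynomial.C (T (-1))) := by
    rw [mul_add, ← Polynomial.C_mul, ← T_add]
    norm_num [add_comm]
  rw [h1, mul_pow, ← Polynomial.C_pow, Polynomial.coeff_C_mul, Polynomial.coeff_X_add_C_pow]
  by_cases hj : j ≤ b
  · rw [T_pow, T_pow, ← mul_assoc, ← T_add]
    congr 2
    omega
  · simp [Nat.choose_eq_zero_of_lt (by omega : b < j)]

/-- Entrywise constant-term evaluation for the odd-size partial sums at `t = τ⁻¹`: the
    coefficient of `u^0` in `(1 + τ⁻¹u) u^{ℓ-m+p̃} (τ+u)^{ℓ+p̃-1} (τ+u⁻¹)^{m+p̃}`, a Laurent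
    polynomial in `u` over `ℤ[τ,τ⁻¹]`, equals
    `∑_{r=ℓ}^{2m} τ^{p̃+2m+2ℓ-2r-1} C(ℓ+p̃, r-ℓ) C(m+p̃, 2m-r)`. -/
theorem odd_size_constant_term_Sminus (ℓ m ptil : ℕ) (hℓ : 1 ≤ ℓ) (hm : 1 ≤ m)
    (hptil : 1 ≤ ptil) :
    ((1 + LaurentPolynomial.C (LaurentPolynomial.T (-1 : ℤ)) * LaurentPolynomial.T 1) *
          LaurentPolynomial.T ((ℓ : ℤ) - (m : ℤ) + (ptil : ℤ)) *
          (LaurentPolynomial.C (LaurentPolynomial.T (1 : ℤ)) +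
              LaurentPolynomial.T 1) ^ (ℓ + ptil - 1) *
          (LaurentPolynomial.C (LaurentPolynomial.T (1 : ℤ)) +
              LaurentPolynomial.T (-1)) ^ (m + ptil) :
        LaurentPolynomial (LaurentPolynomial ℤ)).coeff 0 =
      ∑ r ∈ Finset.Icc ℓ (2 * m),
        LaurentPolynomial.C
            (intChoose ((ℓ : ℤ) + (ptil : ℤ)) ((r : ℤ) - (ℓ : ℤ)) *
              intChoose ((m : ℤ) + (ptil : ℤ)) (2 * (m : ℤ) - (r : ℤ))) *
          LaurentPolynomial.T
            ((ptil : ℤ) + 2 * (m : ℤ) + 2 * (ℓ : ℤ) - 2 * (r : ℤ) - 1) := by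
    classical
  set a : ℕ := ℓ + ptil - 1 with ha
  set b : ℕ := m + ptil with hb
  set d : ℤ := (ℓ : ℤ) - (m : ℤ) + (ptil : ℤ) with hd
  set τ : LaurentPolynomial ℤ := LaurentPolynomial.T 1 with hτ
  set τ' : LaurentPolynomial ℤ := LaurentPolynomial.T (-1) with hτ'
  set F : Polynomial (LaurentPolynomial ℤ) := (Polynomial.C τ + Polynomial.X) ^ a with hF
  set G : Polynomial (LaurentPolynomial ℤ) :=
    (1 + Polynomial.C τ * Polynomial.X) ^ b with hG
  set p : Polynomial (LaurentPolynomial ℤ) :=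
    (1 + Polynomial.C τ' * Polynomial.X) * F * G with hp
  -- Step A : rewrite the Laurent expression
  have hGb : (LaurentPolynomial.C τ + LaurentPolynomial.T (-1) :
      LaurentPolynomial (LaurentPolynomial ℤ)) ^ b * LaurentPolynomial.T (b : ℤ)
      = (1 + LaurentPolynomial.C τ * LaurentPolynomial.T 1) ^ b := by
    have h2 : (LaurentPolynomial.C τ + LaurentPolynomial.T (-1) :
        LaurentPolynomial (LaurentPolynomial ℤ)) * LaurentPolynomial.T 1
        = 1 + LaurentPolynomial.C τ * LaurentPolynomial.T 1 := by
      rw [add_mul, ← T_add]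
      norm_num [add_comm]
    rw [← h2, mul_pow, T_pow, mul_one]
  have key : ((1 + LaurentPolynomial.C τ' * LaurentPolynomial.T 1) * LaurentPolynomial.T d *
      (LaurentPolynomial.C τ + LaurentPolynomial.T 1) ^ a *
      (LaurentPolynomial.C τ + LaurentPolynomial.T (-1)) ^ b :
      LaurentPolynomial (LaurentPolynomial ℤ))
      = Polynomial.toLaurent p * LaurentPolynomial.T (d - b) := by
    have hp' : (Polynomial.toLaurent p : LaurentPolynomial (LaurentPolynomial ℤ))
        = (1 + LaurentPolynomial.C τ' * LaurentPolynomial.T 1) *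
          (LaurentPolynomial.C τ + LaurentPolynomial.T 1) ^ a *
          (1 + LaurentPolynomial.C τ * LaurentPolynomial.T 1) ^ b := by
      simp only [hp, hF, hG, map_mul, map_add, map_pow, map_one,
        Polynomial.toLaurent_C, Polynomial.toLaurent_X]
    have hT : (LaurentPolynomial.T d : LaurentPolynomial (LaurentPolynomial ℤ))
        = LaurentPolynomial.T (d - b) * LaurentPolynomial.T (b : ℤ) := by
      rw [← T_add]; congr 1; ring
    rw [hp', ← hGb, hT]
    ring
  rw [key]
  have happ : ((Polynomial.toLaurent p * LaurentPolynomial.T (d - b) :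
      LaurentPolynomial (LaurentPolynomial ℤ))).coeff 0
      = (Polynomial.toLaurent p).coeff ((b : ℤ) - d) := by
    have := AddMonoidAlgebra.coeff_mul_single_add (Polynomial.toLaurent p)
      (1 : LaurentPolynomial ℤ) (d - b) ((b : ℤ) - d)
    rw [show ((b : ℤ) - d) + (d - b) = 0 by ring, mul_one] at this
    simpa only [LaurentPolynomial.T] using this
  rw [happ]
  rcases le_or_gt ℓ (2 * m) with hcase | hcase
  · -- main case
    obtain ⟨N, hNd, hN⟩ : ∃ N : ℕ, ((b : ℤ) - d = (N : ℤ)) ∧ ℓ + N = 2 * m :=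
      ⟨2 * m - ℓ, by rw [hb, hd]; omega, by omega⟩
    rw [hNd]
    have hcoeff : (Polynomial.toLaurent p).coeff ((N : ℤ)) = p.coeff N := by
      rw [LaurentPolynomial.coeff_toLaurent]
      exact Finsupp.mapDomain_apply (Nat.castEmbedding (R := ℤ)).injective _ N
    rw [hcoeff]
    -- coefficient formulas
    have hFc : ∀ i : ℕ, F.coeff i
        = T ((a - i : ℕ) : ℤ) * (a.choose i : LaurentPolynomial ℤ) := by
      intro i; rw [hF, hτ]; exact coeff_CT_add_X_pow a i
    have hGc : ∀ j : ℕ, G.coeff j = T (j : ℤ) * (b.choose j : LaurentPolynomial ℤ) := by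
      intro j; rw [hG, hτ]; exact coeff_one_add_CT_mul_X_pow b j
    have hq : ∀ n : ℕ, (F * G).coeff n
        = ∑ i ∈ range (n + 1), F.coeff i * G.coeff (n - i) := by
      intro n
      rw [Polynomial.coeff_mul]
      exact Finset.Nat.sum_antidiagonal_eq_sum_range_succ_mk _ n
    have hXq : (Polynomial.X * (F * G)).coeff N
        = ∑ i ∈ range N, F.coeff i * G.coeff (N - 1 - i) := by
      cases N with
      | zero => simp [Polynomial.mul_coeff_zero]
      | succ k =>
        rw [Polynomial.coeff_X_mul, hq k]
        refine Finset.sum_congr rfl fun i hi => ?_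
        have : k + 1 - 1 - i = k - i := by omega
        rw [this]
    have hpN : p.coeff N
        = (∑ s ∈ range (N + 1), F.coeff s * G.coeff (N - s))
          + ∑ i ∈ range N, τ' * (F.coeff i * G.coeff (N - 1 - i)) := by
      have hsplit : p = F * G + Polynomial.C τ' * (Polynomial.X * (F * G)) := by
        rw [hp]; ring
      rw [hsplit, Polynomial.coeff_add, Polynomial.coeff_C_mul, hXq, hq, Finset.mul_sum]
    rw [hpN]
    -- rewrite the RHS over `range (N+1)`
    have hIcc : Finset.Icc ℓ (2 * m)
        = (range (N + 1)).map ⟨fun s => ℓ + s, fun x y h => by simpa using h⟩ := by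
      ext r
      simp only [mem_Icc, mem_map, mem_range, Function.Embedding.coeFn_mk]
      constructor
      · intro h; exact ⟨r - ℓ, by omega, show ℓ + (r - ℓ) = r by omega⟩
      · rintro ⟨s, hs, rfl⟩; exact (show ℓ ≤ ℓ + s ∧ ℓ + s ≤ 2 * m by omega)
    have hRHS : (∑ r ∈ Finset.Icc ℓ (2 * m),
          LaurentPolynomial.C
              (intChoose ((ℓ : ℤ) + (ptil : ℤ)) ((r : ℤ) - (ℓ : ℤ)) *
                intChoose ((m : ℤ) + (ptil : ℤ)) (2 * (m : ℤ) - (r : ℤ))) *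
            LaurentPolynomial.T ((ptil : ℤ) + 2 * (m : ℤ) + 2 * (ℓ : ℤ) - 2 * (r : ℤ) - 1))
        = ∑ s ∈ range (N + 1),
            LaurentPolynomial.C (((a + 1).choose s : ℤ) * (b.choose (N - s) : ℤ)) *
              T ((ptil : ℤ) + 2 * (m : ℤ) - 2 * (s : ℤ) - 1) := by
      rw [hIcc, Finset.sum_map]
      refine Finset.sum_congr rfl fun s hs => ?_
      simp only [mem_range] at hs
      show LaurentPolynomial.C
            (intChoose ((ℓ : ℤ) + (ptil : ℤ)) (((ℓ + s : ℕ) : ℤ) - (ℓ : ℤ)) *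
              intChoose ((m : ℤ) + (ptil : ℤ)) (2 * (m : ℤ) - ((ℓ + s : ℕ) : ℤ))) *
          LaurentPolynomial.T
            ((ptil : ℤ) + 2 * (m : ℤ) + 2 * (ℓ : ℤ) - 2 * ((ℓ + s : ℕ) : ℤ) - 1)
        = LaurentPolynomial.C (((a + 1).choose s : ℤ) * (b.choose (N - s) : ℤ)) *
            T ((ptil : ℤ) + 2 * (m : ℤ) - 2 * (s : ℤ) - 1)
      have h1 : intChoose ((ℓ : ℤ) + (ptil : ℤ)) (((ℓ + s : ℕ) : ℤ) - (ℓ : ℤ))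
          = ((a + 1).choose s : ℤ) := by
        unfold intChoose
        rw [if_pos (by omega)]
        congr 2 <;> omega
      have h2 : intChoose ((m : ℤ) + (ptil : ℤ)) (2 * (m : ℤ) - ((ℓ + s : ℕ) : ℤ))
          = (b.choose (N - s) : ℤ) := by
        unfold intChoose
        rw [if_pos (by omega)]
        congr 2 <;> omega
      have h3 : ((ptil : ℤ) + 2 * (m : ℤ) + 2 * (ℓ : ℤ) - 2 * ((ℓ + s : ℕ) : ℤ) - 1)
          = (ptil : ℤ) + 2 * (m : ℤ) - 2 * (s : ℤ) - 1 := by omega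
      rw [h1, h2, h3]
    rw [hRHS]
    -- Pascal split
    have hsucc : ∀ i : ℕ,
        LaurentPolynomial.C (((a + 1).choose (i + 1) : ℤ) * (b.choose (N - (i + 1)) : ℤ)) *
            T ((ptil : ℤ) + 2 * (m : ℤ) - 2 * ((i + 1 : ℕ) : ℤ) - 1)
        = LaurentPolynomial.C ((a.choose (i + 1) : ℤ) * (b.choose (N - (i + 1)) : ℤ)) *
              T ((ptil : ℤ) + 2 * (m : ℤ) - 2 * ((i + 1 : ℕ) : ℤ) - 1)
          + LaurentPolynomial.C ((a.choose i : ℤ) * (b.choose (N - 1 - i) : ℤ)) *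
              T ((ptil : ℤ) + 2 * (m : ℤ) - 2 * ((i + 1 : ℕ) : ℤ) - 1) := by
      intro i
      have hnn : N - (i + 1) = N - 1 - i := by omega
      rw [Nat.choose_succ_succ' a i, hnn]
      push_cast
      rw [add_mul, map_add]
      ring
    have hPascal : (∑ s ∈ range (N + 1),
          LaurentPolynomial.C (((a + 1).choose s : ℤ) * (b.choose (N - s) : ℤ)) *
            T ((ptil : ℤ) + 2 * (m : ℤ) - 2 * (s : ℤ) - 1))
        = (∑ s ∈ range (N + 1),
            LaurentPolynomial.C ((a.choose s : ℤ) * (b.choose (N - s) : ℤ)) *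
              T ((ptil : ℤ) + 2 * (m : ℤ) - 2 * (s : ℤ) - 1))
          + ∑ i ∈ range N,
              LaurentPolynomial.C ((a.choose i : ℤ) * (b.choose (N - 1 - i) : ℤ)) *
                T ((ptil : ℤ) + 2 * (m : ℤ) - 2 * ((i + 1 : ℕ) : ℤ) - 1) := by
      rw [Finset.sum_range_succ' (fun s =>
            LaurentPolynomial.C (((a + 1).choose s : ℤ) * (b.choose (N - s) : ℤ)) *
              T ((ptil : ℤ) + 2 * (m : ℤ) - 2 * (s : ℤ) - 1)) N,
          Finset.sum_range_succ' (fun s =>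
            LaurentPolynomial.C ((a.choose s : ℤ) * (b.choose (N - s) : ℤ)) *
              T ((ptil : ℤ) + 2 * (m : ℤ) - 2 * (s : ℤ) - 1)) N]
      simp only [hsucc]
      rw [Finset.sum_add_distrib]
      simp only [Nat.choose_zero_right]
      abel
    rw [hPascal]
    -- per-term conversions
    have hterm1 : ∀ s ∈ range (N + 1), F.coeff s * G.coeff (N - s)
        = LaurentPolynomial.C ((a.choose s : ℤ) * (b.choose (N - s) : ℤ)) *
            T ((ptil : ℤ) + 2 * (m : ℤ) - 2 * (s : ℤ) - 1) := by
      intro s hs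
      simp only [mem_range] at hs
      rw [hFc, hGc]
      by_cases hsa : s ≤ a
      · exact helperT _ _ _ _ _ (by omega)
      · have h0 : a.choose s = 0 := Nat.choose_eq_zero_of_lt (by omega)
        simp [h0]
    have hterm2 : ∀ i ∈ range N, τ' * (F.coeff i * G.coeff (N - 1 - i))
        = LaurentPolynomial.C ((a.choose i : ℤ) * (b.choose (N - 1 - i) : ℤ)) *
            T ((ptil : ℤ) + 2 * (m : ℤ) - 2 * ((i + 1 : ℕ) : ℤ) - 1) := by
      intro i hi
      simp only [mem_range] at hi
      rw [hτ', hFc, hGc]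
      by_cases hia : i ≤ a
      · rw [helperT (a.choose i) (b.choose (N - 1 - i)) _ _
            (((a - i : ℕ) : ℤ) + ((N - 1 - i : ℕ) : ℤ)) rfl]
        exact helperT2 _ _ _ (by omega)
      · have h0 : a.choose i = 0 := Nat.choose_eq_zero_of_lt (by omega)
        simp [h0]
    exact congrArg₂ HAdd.hAdd (Finset.sum_congr rfl hterm1) (Finset.sum_congr rfl hterm2)
  · -- empty case
    have hbd2 : (b : ℤ) - d = 2 * (m : ℤ) - (ℓ : ℤ) := by rw [hb, hd]; push_cast; ring
    have h0 : (Polynomial.toLaurent p).coeff ((b : ℤ) - d) = 0 := by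
      rw [LaurentPolynomial.coeff_toLaurent]
      refine Finsupp.mapDomain_notin_range _ _ ?_
      rintro ⟨n, hn⟩
      change ((n : ℕ) : ℤ) = _ at hn
      rw [hbd2] at hn
      omega
    rw [h0, Finset.Icc_eq_empty (by omega), Finset.sum_empty]
end

section
/- Let τ be an indeterminate and work with Laurent polynomials in u over ℤ[τ, τ^{−1}]. For all integers ℓ ≥ 1, m ≥ 1 and p̃ ≥ 0, the following two constant-term evaluations hold: (i) the coefficient of u^0 in (1 + τ·u) · u^{ℓ−m+p̃} · (τ + u)^{ℓ+p̃} · (τ + u^{−1})^{m+p̃} equals Σ_{r=ℓ}^{2m} τ^{p̃+2m+2ℓ−2r} · C(ℓ+p̃, r−ℓ) · C(m+p̃+1, 2m−r); (ii) the coefficient of u^0 in (1 + τ^{−1}·u) · u^{ℓ−m+p̃} · (τ + u)^{ℓ+p̃} · (τ + u^{−1})^{m+p̃} equals Σ_{r=ℓ}^{2m} τ^{p̃+2m+2ℓ−2r} · C(ℓ+p̃+1, r−ℓ) · C(m+p̃, 2m−r), negative powers of τ being interpreted in ℤ[τ, τ^{−1}]. -/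
open LaurentPolynomial Finset

namespace EvenSizeCTAux

lemma intChoose_of_neg (a : ℤ) {k : ℤ} (hk : k < 0) : intChoose a k = 0 := by
  simp [intChoose, not_le.2 hk]

lemma intChoose_of_gt (a : ℕ) {k : ℤ} (hk : (a:ℤ) < k) : intChoose a k = 0 := by
  have h0 : 0 ≤ k := le_trans (Int.natCast_nonneg a) hk.le
  rw [intChoose, if_pos h0, Int.toNat_natCast, Nat.choose_eq_zero_of_lt (Int.lt_toNat.2 hk)]
  simp

lemma intChoose_symm (a : ℕ) (k : ℤ) : intChoose a k = intChoose a ((a:ℤ) - k) := by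
  rcases lt_or_ge k 0 with h | h
  · rw [intChoose_of_neg _ h, intChoose_of_gt a (by omega)]
  rcases le_or_gt k (a:ℤ) with h2 | h2
  · rw [intChoose, if_pos h, intChoose, if_pos (by omega), Int.toNat_natCast]
    have : ((a:ℤ) - k).toNat = a - k.toNat := by omega
    rw [this, Nat.choose_symm (by omega)]
  · rw [intChoose_of_gt a h2, intChoose_of_neg _ (by omega)]

lemma intChoose_pascal (a : ℕ) (k : ℤ) (hk : 0 ≤ k) :
    intChoose ((a:ℤ)+1) k = intChoose a k + intChoose a (k-1) := by
  rcases eq_or_lt_of_le hk with h | h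
  · rw [← h]; simp [intChoose]
  · rw [intChoose, if_pos hk, intChoose, if_pos hk, intChoose, if_pos (by omega)]
    have e1 : ((a:ℤ)+1).toNat = a + 1 := by omega
    have e2 : k.toNat = (k-1).toNat + 1 := by omega
    rw [e1, Int.toNat_natCast, e2, Nat.choose_succ_succ]
    push_cast; ring

lemma intChoose_nat (a : ℕ) {k : ℤ} (h0 : 0 ≤ k) : intChoose a k = a.choose k.toNat := by
  rw [intChoose, if_pos h0, Int.toNat_natCast]

lemma sum_range_int {M : Type*} [AddCommMonoid M] (n : ℕ) (f : ℤ → M) :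
    ∑ i ∈ range (n+1), f i = ∑ i ∈ Icc (0:ℤ) (n:ℤ), f i := by
  refine Finset.sum_nbij' (fun k => (k : ℤ)) (fun k => k.toNat) ?_ ?_ ?_ ?_ ?_ <;>
    intro x hx <;> simp_all <;> omega

noncomputable abbrev Rr := LaurentPolynomial ℤ

lemma expand' (n : ℕ) (σ : ℤ) :
    ((LaurentPolynomial.C (T 1 : Rr) + T σ) ^ n : LaurentPolynomial Rr)
      = ∑ i ∈ Icc (0:ℤ) (n:ℤ),
          LaurentPolynomial.C ((T i : Rr) * ((intChoose n i : ℤ) : Rr)) * T (σ * ((n:ℤ) - i)) := by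
  rw [add_pow, ← sum_range_int]
  refine Finset.sum_congr rfl fun i hi => ?_
  simp only [mem_range] at hi
  have hi' : i ≤ n := by omega
  rw [← map_pow, T_pow, mul_one, T_pow, intChoose_nat n (by positivity), Int.toNat_natCast]
  have h3 : ((n - i : ℕ) : ℤ) * σ = σ * ((n:ℤ) - (i:ℤ)) := by
    push_cast [Nat.cast_sub hi']; ring
  rw [h3]
  have h4 : ((n.choose i : ℕ) : LaurentPolynomial Rr)
      = LaurentPolynomial.C (((n.choose i : ℤ) : Rr)) := by push_cast; rfl
  rw [h4, map_mul]
  ring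

lemma CT_apply (r : Rr) (n k : ℤ) :
    (LaurentPolynomial.C r * T n : LaurentPolynomial Rr).coeff k = if n = k then r else 0 := by
  rw [← single_eq_C_mul_T, AddMonoidAlgebra.coeff_single]; exact Finsupp.single_apply

lemma CT4 (r1 r2 r3 : Rr) (v s n1 n2 : ℤ) :
    ((LaurentPolynomial.C r1 * T v) * T s * (LaurentPolynomial.C r2 * T n1) *
        (LaurentPolynomial.C r3 * T n2) : LaurentPolynomial Rr)
      = LaurentPolynomial.C (r1*r2*r3) * T (v+s+n1+n2) := by
  rw [T_add, T_add, T_add, map_mul, map_mul]; ring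

lemma core (w v s : ℤ) (a b : ℕ) :
    ((LaurentPolynomial.C (T w : Rr) * T v) * T s *
        (LaurentPolynomial.C (T 1) + T 1) ^ a *
        (LaurentPolynomial.C (T 1) + T (-1)) ^ b : LaurentPolynomial Rr).coeff 0
      = ∑ i ∈ Icc (0:ℤ) (a:ℤ),
          LaurentPolynomial.C (intChoose a i * intChoose b ((b:ℤ) + i - (a:ℤ) - v - s))
            * T (w + i + ((b:ℤ) + i - (a:ℤ) - v - s)) := by
  rw [expand' a 1, expand' b (-1), Finset.mul_sum, AddMonoidAlgebra.coeff_sum, Finset.sum_apply']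
  have step : ∀ j ∈ Icc (0:ℤ) (b:ℤ),
      ((LaurentPolynomial.C (T w : Rr) * T v * T s *
          ∑ i ∈ Icc (0:ℤ) (a:ℤ), LaurentPolynomial.C ((T i : Rr) * ((intChoose a i : ℤ) : Rr))
            * T (1 * ((a:ℤ) - i))) *
        (LaurentPolynomial.C ((T j : Rr) * ((intChoose b j : ℤ) : Rr)) * T ((-1) * ((b:ℤ) - j))) : LaurentPolynomial Rr).coeff 0
      = ∑ i ∈ Icc (0:ℤ) (a:ℤ),
          if v + s + 1 * ((a:ℤ) - i) + (-1) * ((b:ℤ) - j) = 0 then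
            (T w : Rr) * ((T i : Rr) * ((intChoose a i : ℤ) : Rr))
              * ((T j : Rr) * ((intChoose b j : ℤ) : Rr)) else 0 := by
    intro j hj
    rw [Finset.mul_sum, Finset.sum_mul, AddMonoidAlgebra.coeff_sum, Finset.sum_apply']
    refine sum_congr rfl fun i hi => ?_
    rw [CT4, CT_apply]
  rw [Finset.sum_congr rfl step, Finset.sum_comm]
  refine sum_congr rfl fun i hi => ?_
  have hcond : ∀ j ∈ Icc (0:ℤ) (b:ℤ),
      (if v + s + 1 * ((a:ℤ) - i) + (-1) * ((b:ℤ) - j) = 0 then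
          (T w : Rr) * ((T i : Rr) * ((intChoose a i : ℤ) : Rr))
            * ((T j : Rr) * ((intChoose b j : ℤ) : Rr)) else 0)
      = (if j = (b:ℤ) + i - (a:ℤ) - v - s then
          (T w : Rr) * ((T i : Rr) * ((intChoose a i : ℤ) : Rr))
            * ((T j : Rr) * ((intChoose b j : ℤ) : Rr)) else 0) := by
    intro j hj
    exact if_congr (by omega) rfl rfl
  rw [Finset.sum_congr rfl hcond, Finset.sum_ite_eq']
  set J : ℤ := (b:ℤ) + i - (a:ℤ) - v - s with hJ
  by_cases hmem : J ∈ Icc (0:ℤ) (b:ℤ)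
  · rw [if_pos hmem]
    rw [T_add, T_add, eq_intCast]
    push_cast
    ring
  · rw [if_neg hmem]
    simp only [mem_Icc, not_and_or, not_le] at hmem
    have : intChoose b J = 0 := by
      rcases hmem with h | h
      · exact intChoose_of_neg _ h
      · exact intChoose_of_gt _ h
    rw [this, mul_zero]
    simp

lemma core0 (s : ℤ) (a b : ℕ) :
    ((T s * (LaurentPolynomial.C (T 1) + T 1) ^ a *
        (LaurentPolynomial.C (T 1) + T (-1)) ^ b : LaurentPolynomial Rr)).coeff 0
      = ∑ i ∈ Icc (0:ℤ) (a:ℤ),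
          LaurentPolynomial.C (intChoose a i * intChoose b ((b:ℤ) + i - (a:ℤ) - 0 - s))
            * T (0 + i + ((b:ℤ) + i - (a:ℤ) - 0 - s)) := by
  have h := core 0 0 s a b
  rw [show (LaurentPolynomial.C (T (0:ℤ)) * T (0:ℤ) * T s : LaurentPolynomial Rr) = T s by
    simp [T_zero]] at h
  exact h

lemma sum_congr_support {M : Type*} [AddCommMonoid M] (s t : Finset ℤ) (H : ℤ → M)
    (hs : ∀ x ∈ s, x ∉ t → H x = 0) (ht : ∀ x ∈ t, x ∉ s → H x = 0) :
    ∑ x ∈ s, H x = ∑ x ∈ t, H x := by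
  have h1 : ∑ x ∈ s ∩ t, H x = ∑ x ∈ s, H x :=
    Finset.sum_subset (Finset.inter_subset_left)
      (fun x hx hnot => hs x hx (fun h => hnot (Finset.mem_inter.2 ⟨hx, h⟩)))
  have h2 : ∑ x ∈ s ∩ t, H x = ∑ x ∈ t, H x :=
    Finset.sum_subset (Finset.inter_subset_right)
      (fun x hx hnot => ht x hx (fun h => hnot (Finset.mem_inter.2 ⟨h, hx⟩)))
  rw [← h1, h2]

lemma sum_Icc_nat {M : Type*} [AddCommMonoid M] (A B : ℕ) (f : ℤ → M) :
    ∑ r ∈ Icc (A:ℤ) (B:ℤ), f r = ∑ r ∈ Icc A B, f (r:ℤ) := by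
  refine Finset.sum_nbij' (fun k => k.toNat) (fun k => (k:ℤ)) ?_ ?_ ?_ ?_ ?_ <;>
    intro x hx <;> simp_all <;> first | omega | (congr 1 <;> omega)

lemma sum_reflect {M : Type*} [AddCommMonoid M] (c A B : ℤ) (H : ℤ → M) :
    ∑ i ∈ Icc (c - B) (c - A), H i = ∑ r ∈ Icc A B, H (c - r) := by
  refine Finset.sum_nbij' (fun i => c - i) (fun r => c - r) ?_ ?_ ?_ ?_ ?_ <;>
    intro x hx <;> simp_all <;> first | omega | (congr 1 <;> omega)

lemma reindex_sum {M : Type*} [AddCommMonoid M] (a : ℕ) (c : ℤ) (A B : ℕ) (H : ℤ → M)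
    (h1 : ∀ i : ℤ, 0 ≤ i → i ≤ (a:ℤ) → (i < c - (B:ℤ) ∨ c - (A:ℤ) < i) → H i = 0)
    (h2 : ∀ r : ℤ, (A:ℤ) ≤ r → r ≤ (B:ℤ) → (c - r < 0 ∨ (a:ℤ) < c - r) → H (c - r) = 0) :
    ∑ i ∈ Icc (0:ℤ) (a:ℤ), H i = ∑ r ∈ Icc A B, H (c - (r:ℤ)) := by
  rw [← sum_Icc_nat A B (fun r => H (c - r)), ← sum_reflect]
  refine sum_congr_support _ _ _ ?_ ?_
  · intro x hx hnx
    simp only [mem_Icc] at hx hnx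
    exact h1 x hx.1 hx.2 (by omega)
  · intro x hx hnx
    simp only [mem_Icc] at hx hnx
    have := h2 (c - x) (by omega) (by omega) (by omega)
    simpa using this

lemma Hzero (a b : ℕ) (i k e : ℤ)
    (h : i < 0 ∨ (a:ℤ) < i ∨ k < 0 ∨ (b:ℤ) < k) :
    LaurentPolynomial.C (intChoose a i * intChoose b k) * (T e : Rr) = 0 := by
  have hz : intChoose a i * intChoose b k = 0 := by
    rcases h with h|h|h|h
    · rw [intChoose_of_neg _ h, zero_mul]
    · rw [intChoose_of_gt a h, zero_mul]
    · rw [intChoose_of_neg _ h, mul_zero]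
    · rw [intChoose_of_gt b h, mul_zero]
  rw [hz, map_zero, zero_mul]

lemma Hmatch (a b : ℕ) (x y e x' y' e' : ℤ) (hx : x = (a:ℤ) - x') (hy : y = y') (he : e = e') :
    LaurentPolynomial.C (intChoose a x * intChoose b y) * (T e : Rr)
      = LaurentPolynomial.C (intChoose a x' * intChoose b y') * (T e' : Rr) := by
  rw [hx, ← intChoose_symm, hy, he]

end EvenSizeCTAux

open EvenSizeCTAux

/-- Entrywise constant-term evaluations for the even-size partial sums at `t = τ` and
    `t = τ⁻¹`: for Laurent polynomials in `u` over `ℤ[τ,τ⁻¹]`,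
    (i) the coefficient of `u^0` in `(1 + τu) u^{ℓ-m+p̃} (τ+u)^{ℓ+p̃} (τ+u⁻¹)^{m+p̃}` equals
    `∑_{r=ℓ}^{2m} τ^{p̃+2m+2ℓ-2r} C(ℓ+p̃, r-ℓ) C(m+p̃+1, 2m-r)`, and
    (ii) the coefficient of `u^0` in `(1 + τ⁻¹u) u^{ℓ-m+p̃} (τ+u)^{ℓ+p̃} (τ+u⁻¹)^{m+p̃}` equals
    `∑_{r=ℓ}^{2m} τ^{p̃+2m+2ℓ-2r} C(ℓ+p̃+1, r-ℓ) C(m+p̃, 2m-r)`. -/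
theorem even_size_constant_terms_Splus_Sminus (ℓ m ptil : ℕ) (hℓ : 1 ≤ ℓ) (hm : 1 ≤ m) :
    (((1 + LaurentPolynomial.C (LaurentPolynomial.T (1 : ℤ)) * LaurentPolynomial.T 1) *
            LaurentPolynomial.T ((ℓ : ℤ) - (m : ℤ) + (ptil : ℤ)) *
            (LaurentPolynomial.C (LaurentPolynomial.T (1 : ℤ)) +
                LaurentPolynomial.T 1) ^ (ℓ + ptil) *
            (LaurentPolynomial.C (LaurentPolynomial.T (1 : ℤ)) +
                LaurentPolynomial.T (-1)) ^ (m + ptil) :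
          LaurentPolynomial (LaurentPolynomial ℤ)).coeff 0 =
        ∑ r ∈ Finset.Icc ℓ (2 * m),
          LaurentPolynomial.C
              (intChoose ((ℓ : ℤ) + (ptil : ℤ)) ((r : ℤ) - (ℓ : ℤ)) *
                intChoose ((m : ℤ) + (ptil : ℤ) + 1) (2 * (m : ℤ) - (r : ℤ))) *
            LaurentPolynomial.T
              ((ptil : ℤ) + 2 * (m : ℤ) + 2 * (ℓ : ℤ) - 2 * (r : ℤ))) ∧
      (((1 + LaurentPolynomial.C (LaurentPolynomial.T (-1 : ℤ)) * LaurentPolynomial.T 1) *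
            LaurentPolynomial.T ((ℓ : ℤ) - (m : ℤ) + (ptil : ℤ)) *
            (LaurentPolynomial.C (LaurentPolynomial.T (1 : ℤ)) +
                LaurentPolynomial.T 1) ^ (ℓ + ptil) *
            (LaurentPolynomial.C (LaurentPolynomial.T (1 : ℤ)) +
                LaurentPolynomial.T (-1)) ^ (m + ptil) :
          LaurentPolynomial (LaurentPolynomial ℤ)).coeff 0 =
        ∑ r ∈ Finset.Icc ℓ (2 * m),
          LaurentPolynomial.C
              (intChoose ((ℓ : ℤ) + (ptil : ℤ) + 1) ((r : ℤ) - (ℓ : ℤ)) *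
                intChoose ((m : ℤ) + (ptil : ℤ)) (2 * (m : ℤ) - (r : ℤ))) *
            LaurentPolynomial.T
              ((ptil : ℤ) + 2 * (m : ℤ) + 2 * (ℓ : ℤ) - 2 * (r : ℤ))) := by
  constructor
  · have hsplit : ((1 + LaurentPolynomial.C (T (1:ℤ)) * T 1) * T ((ℓ : ℤ) - m + ptil) *
        (LaurentPolynomial.C (T 1) + T 1) ^ (ℓ + ptil) *
        (LaurentPolynomial.C (T 1) + T (-1)) ^ (m + ptil) : LaurentPolynomial Rr)
      = (T ((ℓ : ℤ) - m + ptil) * (LaurentPolynomial.C (T 1) + T 1) ^ (ℓ + ptil) *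
          (LaurentPolynomial.C (T 1) + T (-1)) ^ (m + ptil))
        + ((LaurentPolynomial.C (T (1:ℤ)) * T 1) * T ((ℓ : ℤ) - m + ptil) *
            (LaurentPolynomial.C (T 1) + T 1) ^ (ℓ + ptil) *
            (LaurentPolynomial.C (T 1) + T (-1)) ^ (m + ptil)) := by ring
    rw [hsplit, AddMonoidAlgebra.coeff_add, Finsupp.add_apply, core0, core 1 1]
    have hR : ∀ r ∈ Finset.Icc ℓ (2*m),
        LaurentPolynomial.C (intChoose ((ℓ:ℤ)+(ptil:ℤ)) ((r:ℤ)-(ℓ:ℤ)) *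
            intChoose ((m:ℤ)+(ptil:ℤ)+1) (2*(m:ℤ)-(r:ℤ))) *
          (T ((ptil:ℤ) + 2*(m:ℤ) + 2*(ℓ:ℤ) - 2*(r:ℤ)) : Rr)
        = LaurentPolynomial.C (intChoose ((ℓ+ptil:ℕ):ℤ) ((r:ℤ)-(ℓ:ℤ)) *
              intChoose ((m+ptil:ℕ):ℤ) (2*(m:ℤ)-(r:ℤ))) *
            (T ((ptil:ℤ) + 2*(m:ℤ) + 2*(ℓ:ℤ) - 2*(r:ℤ)) : Rr)
          + LaurentPolynomial.C (intChoose ((ℓ+ptil:ℕ):ℤ) ((r:ℤ)-(ℓ:ℤ)) *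
              intChoose ((m+ptil:ℕ):ℤ) (2*(m:ℤ)-(r:ℤ)-1)) *
            (T ((ptil:ℤ) + 2*(m:ℤ) + 2*(ℓ:ℤ) - 2*(r:ℤ)) : Rr) := by
      intro r hr
      simp only [Finset.mem_Icc] at hr
      rw [show ((m:ℤ)+(ptil:ℤ)+1) = (((m+ptil:ℕ):ℤ)+1) by push_cast; ring,
          intChoose_pascal (m+ptil) _ (by omega),
          show ((ℓ:ℤ)+(ptil:ℤ)) = ((ℓ+ptil:ℕ):ℤ) by push_cast; ring,
          mul_add, map_add, add_mul]
    rw [Finset.sum_congr rfl hR, Finset.sum_add_distrib]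
    congr 1
    · refine (reindex_sum (ℓ+ptil) (2*(ℓ:ℤ)+ptil) ℓ (2*m) _ ?_ ?_).trans
        (Finset.sum_congr rfl fun r hr => ?_)
      · intro i h0 hA hor
        exact Hzero (ℓ+ptil) (m+ptil) i _ _ (by omega)
      · intro r h0 hA hor
        exact Hzero (ℓ+ptil) (m+ptil) _ _ _ (by omega)
      · exact Hmatch (ℓ+ptil) (m+ptil) _ _ _ _ _ _ (by omega) (by omega) (by omega)
    · refine (reindex_sum (ℓ+ptil) (2*(ℓ:ℤ)+ptil) ℓ (2*m) _ ?_ ?_).trans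
        (Finset.sum_congr rfl fun r hr => ?_)
      · intro i h0 hA hor
        exact Hzero (ℓ+ptil) (m+ptil) i _ _ (by omega)
      · intro r h0 hA hor
        exact Hzero (ℓ+ptil) (m+ptil) _ _ _ (by omega)
      · exact Hmatch (ℓ+ptil) (m+ptil) _ _ _ _ _ _ (by omega) (by omega) (by omega)
  · have hsplit : ((1 + LaurentPolynomial.C (T (-1:ℤ)) * T 1) * T ((ℓ : ℤ) - m + ptil) *
        (LaurentPolynomial.C (T 1) + T 1) ^ (ℓ + ptil) *
        (LaurentPolynomial.C (T 1) + T (-1)) ^ (m + ptil) : LaurentPolynomial Rr)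
      = (T ((ℓ : ℤ) - m + ptil) * (LaurentPolynomial.C (T 1) + T 1) ^ (ℓ + ptil) *
          (LaurentPolynomial.C (T 1) + T (-1)) ^ (m + ptil))
        + ((LaurentPolynomial.C (T (-1:ℤ)) * T 1) * T ((ℓ : ℤ) - m + ptil) *
            (LaurentPolynomial.C (T 1) + T 1) ^ (ℓ + ptil) *
            (LaurentPolynomial.C (T 1) + T (-1)) ^ (m + ptil)) := by ring
    rw [hsplit, AddMonoidAlgebra.coeff_add, Finsupp.add_apply, core0, core (-1) 1]
    have hR : ∀ r ∈ Finset.Icc ℓ (2*m),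
        LaurentPolynomial.C (intChoose ((ℓ:ℤ)+(ptil:ℤ)+1) ((r:ℤ)-(ℓ:ℤ)) *
            intChoose ((m:ℤ)+(ptil:ℤ)) (2*(m:ℤ)-(r:ℤ))) *
          (T ((ptil:ℤ) + 2*(m:ℤ) + 2*(ℓ:ℤ) - 2*(r:ℤ)) : Rr)
        = LaurentPolynomial.C (intChoose ((ℓ+ptil:ℕ):ℤ) ((r:ℤ)-(ℓ:ℤ)) *
              intChoose ((m+ptil:ℕ):ℤ) (2*(m:ℤ)-(r:ℤ))) *
            (T ((ptil:ℤ) + 2*(m:ℤ) + 2*(ℓ:ℤ) - 2*(r:ℤ)) : Rr)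
          + LaurentPolynomial.C (intChoose ((ℓ+ptil:ℕ):ℤ) ((r:ℤ)-(ℓ:ℤ)-1) *
              intChoose ((m+ptil:ℕ):ℤ) (2*(m:ℤ)-(r:ℤ))) *
            (T ((ptil:ℤ) + 2*(m:ℤ) + 2*(ℓ:ℤ) - 2*(r:ℤ)) : Rr) := by
      intro r hr
      simp only [Finset.mem_Icc] at hr
      rw [show ((ℓ:ℤ)+(ptil:ℤ)+1) = (((ℓ+ptil:ℕ):ℤ)+1) by push_cast; ring,
          intChoose_pascal (ℓ+ptil) _ (by omega),
          show ((m:ℤ)+(ptil:ℤ)) = ((m+ptil:ℕ):ℤ) by push_cast; ring,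
          add_mul, map_add, add_mul]
    rw [Finset.sum_congr rfl hR, Finset.sum_add_distrib]
    congr 1
    · refine (reindex_sum (ℓ+ptil) (2*(ℓ:ℤ)+ptil) ℓ (2*m) _ ?_ ?_).trans
        (Finset.sum_congr rfl fun r hr => ?_)
      · intro i h0 hA hor
        exact Hzero (ℓ+ptil) (m+ptil) i _ _ (by omega)
      · intro r h0 hA hor
        exact Hzero (ℓ+ptil) (m+ptil) _ _ _ (by omega)
      · exact Hmatch (ℓ+ptil) (m+ptil) _ _ _ _ _ _ (by omega) (by omega) (by omega)
    · refine (reindex_sum (ℓ+ptil) (2*(ℓ:ℤ)+ptil+1) ℓ (2*m) _ ?_ ?_).trans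
        (Finset.sum_congr rfl fun r hr => ?_)
      · intro i h0 hA hor
        exact Hzero (ℓ+ptil) (m+ptil) i _ _ (by omega)
      · intro r h0 hA hor
        exact Hzero (ℓ+ptil) (m+ptil) _ _ _ (by omega)
      · exact Hmatch (ℓ+ptil) (m+ptil) _ _ _ _ _ _ (by omega) (by omega) (by omega)
end

section
/- Let p ≥ 1 and let τ be an indeterminate. In the polynomial ring ℤ[τ][v_1, …, v_p] the following identity holds: Σ_{σ ∈ S_p} sgn(σ) · ∏_{ℓ=1}^{p} v_{σ(ℓ)}^{ℓ} (τ + v_{σ(ℓ)})^{ℓ−1} = ∏_{ℓ=1}^{p} v_ℓ · ∏_{1≤ℓ<m≤p} (v_m − v_ℓ)(τ + v_ℓ + v_m). -/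
open MvPolynomial Finset

/-- The antisymmetrization (Vandermonde-type) identity: in `ℤ[τ][v_1,…,v_p]`,
    `∑_{σ ∈ S_p} sgn(σ) ∏_{ℓ=1}^p v_{σ(ℓ)}^ℓ (τ + v_{σ(ℓ)})^{ℓ-1}
       = ∏_ℓ v_ℓ · ∏_{ℓ<m} (v_m - v_ℓ)(τ + v_ℓ + v_m)`. -/
theorem antisymmetrization_vandermonde_identity (p : ℕ) (hp : 1 ≤ p) :
    (∑ σ : Equiv.Perm (Fin p),
        (Equiv.Perm.sign σ : ℤ) •
          ∏ ℓ : Fin p,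
            (MvPolynomial.X (σ ℓ) : MvPolynomial (Fin p) (Polynomial ℤ)) ^ ((ℓ : ℕ) + 1) *
              (MvPolynomial.C Polynomial.X + MvPolynomial.X (σ ℓ)) ^ (ℓ : ℕ)) =
      (∏ ℓ : Fin p, (MvPolynomial.X ℓ : MvPolynomial (Fin p) (Polynomial ℤ))) *
        ∏ ℓ : Fin p, ∏ m : Fin p,
          if ℓ < m then
            (MvPolynomial.X m - MvPolynomial.X ℓ) *
              (MvPolynomial.C Polynomial.X + MvPolynomial.X ℓ + MvPolynomial.X m)
          else 1 := by
  set R := MvPolynomial (Fin p) (Polynomial ℤ)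
  set τ : R := MvPolynomial.C Polynomial.X with hτ
  set y : Fin p → R := fun m => X m * (τ + X m) with hy
  have hLHS : (∑ σ : Equiv.Perm (Fin p),
        (Equiv.Perm.sign σ : ℤ) •
          ∏ ℓ : Fin p, (X (σ ℓ) : R) ^ ((ℓ : ℕ) + 1) * (τ + X (σ ℓ)) ^ (ℓ : ℕ)) =
      Matrix.det (Matrix.of fun m ℓ : Fin p => (X m : R) * Matrix.vandermonde y m ℓ) := by
    rw [Matrix.det_apply]
    refine Finset.sum_congr rfl fun σ _ => ?_
    congr 1
    refine Finset.prod_congr rfl fun ℓ _ => ?_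
    simp only [Matrix.of_apply, Matrix.vandermonde_apply, hy]
    rw [mul_pow, pow_succ]
    ring
  rw [hLHS, Matrix.det_mul_column, Matrix.det_vandermonde]
  congr 1
  refine Finset.prod_congr rfl fun ℓ _ => ?_
  rw [← Finset.prod_filter]
  have hf : Finset.univ.filter (fun m => ℓ < m) = Finset.Ioi ℓ := by
    ext m; simp
  rw [hf]
  refine Finset.prod_congr rfl fun m _ => ?_
  simp only [hy]
  ring
end

section
/- Let R be a commutative ring, p ≥ 1, and let φ, f_1, …, f_p, g_1, …, g_p be Laurent polynomials in one variable over R. In the ring of Laurent polynomials R[u_1^{±1}, …, u_p^{±1}], the coefficient of the monomial u_1^0⋯u_p^0 (the multivariate constant term) of ∏_{i=1}^{p} φ(u_i) · det_{1≤ℓ,i≤p}( f_ℓ(u_i) ) · det_{1≤m,i≤p}( g_m(u_i) ) equals p! · det_{1≤ℓ,m≤p}( ct(φ·f_ℓ·g_m) ), where ct denotes the constant term (coefficient of u^0) of a one-variable Laurent polynomial over R. -/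
open Finset

/-- The ring homomorphism sending a one-variable Laurent polynomial `h` over `R` to `h(u_i)`
    in the ring of Laurent polynomials `R[u_1^{±1},…,u_p^{±1}]`, realized as the monoid algebra
    of `Fin p →₀ ℤ` over `R`. -/
noncomputable def atVar {R : Type*} [CommRing R] {p : ℕ} (i : Fin p) :
    LaurentPolynomial R →+* AddMonoidAlgebra R (Fin p →₀ ℤ) :=
  AddMonoidAlgebra.mapDomainRingHom R (Finsupp.singleAddHom i)

lemma atVar_eq_sum {R : Type*} [CommRing R] {p : ℕ} (i : Fin p) (h : LaurentPolynomial R) :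
    atVar i h = ∑ n ∈ h.coeff.support ∪ {0}, AddMonoidAlgebra.single (Finsupp.single i n) (h.coeff n) := by
  show AddMonoidAlgebra.ofCoeff (Finsupp.mapDomain _ h.coeff) = _
  rw [Finsupp.mapDomain, Finsupp.sum_of_support_subset _ Finset.subset_union_left]
  · rw [AddMonoidAlgebra.ofCoeff_sum]; rfl
  · intro n _; simp

lemma prod_atVar_apply_zero {R : Type*} [CommRing R] {p : ℕ} (h : Fin p → LaurentPolynomial R) :
    (∏ i : Fin p, atVar i (h i)).coeff (0 : Fin p →₀ ℤ) = ∏ i : Fin p, (h i).coeff (0 : ℤ) := by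
  classical
  simp only [atVar_eq_sum]
  rw [Finset.prod_univ_sum]
  simp only [AddMonoidAlgebra.prod_single]
  rw [AddMonoidAlgebra.coeff_sum, Finsupp.finset_sum_apply]
  have key : ∀ k : Fin p → ℤ, (∑ i : Fin p, Finsupp.single i (k i)) = 0 ↔ k = fun _ => 0 := by
    intro k
    have hv : ∀ j, (∑ i : Fin p, Finsupp.single i (k i)) j = k j := by
      intro j
      rw [Finset.sum_apply']
      simp [Finsupp.single_apply]
    constructor
    · intro h0
      funext j
      have := hv j
      rw [h0] at this
      simpa using this.symm
    · intro hk
      ext j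
      rw [hv j, hk]
      rfl
  rw [Finset.sum_eq_single_of_mem (fun _ => (0 : ℤ))]
  · rw [AddMonoidAlgebra.coeff_single, Finsupp.single_apply, if_pos]
    simp [key]
  · simp [Fintype.mem_piFinset]
  · intro k hk hne
    rw [AddMonoidAlgebra.coeff_single, Finsupp.single_apply, if_neg]
    intro h0
    exact hne ((key k).1 h0)

/-- The discrete (constant-term) Andréief/Heine identity: for one-variable Laurent polynomials
    `φ, f_1, …, f_p, g_1, …, g_p` over a commutative ring `R`, the multivariate constant term
    of `∏_i φ(u_i) · det(f_ℓ(u_i)) · det(g_m(u_i))` equals `p! · det(ct(φ f_ℓ g_m))`. -/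
theorem andreief_constant_term (R : Type*) [CommRing R] (p : ℕ) (hp : 1 ≤ p)
    (φ : LaurentPolynomial R) (f g : Fin p → LaurentPolynomial R) :
    ((∏ i : Fin p, atVar i φ) *
          Matrix.det (Matrix.of fun ℓ i : Fin p => atVar i (f ℓ)) *
          Matrix.det (Matrix.of fun m i : Fin p => atVar i (g m))).coeff
        (0 : Fin p →₀ ℤ) =
      (p.factorial : R) *
        Matrix.det (Matrix.of fun ℓ m : Fin p => (φ * f ℓ * g m).coeff (0 : ℤ)) := by
  classical
  have expand :
      ((∏ i : Fin p, atVar i φ) *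
          Matrix.det (Matrix.of fun ℓ i : Fin p => atVar i (f ℓ)) *
          Matrix.det (Matrix.of fun m i : Fin p => atVar i (g m)))
        = ∑ σ : Equiv.Perm (Fin p), ∑ τ : Equiv.Perm (Fin p),
            ((Equiv.Perm.sign σ * Equiv.Perm.sign τ : ℤ) :
                AddMonoidAlgebra R (Fin p →₀ ℤ)) *
              ∏ i : Fin p, atVar i (φ * f (τ i) * g (σ i)) := by
    rw [Matrix.det_apply', Matrix.det_apply']
    simp only [Finset.mul_sum, Finset.sum_mul, Matrix.of_apply]
    refine Finset.sum_congr rfl fun σ _ => Finset.sum_congr rfl fun τ _ => ?_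
    have hprod : ∏ i : Fin p, atVar i (φ * f (τ i) * g (σ i))
        = (∏ i : Fin p, atVar i φ) * (∏ i : Fin p, atVar i (f (τ i))) *
          (∏ i : Fin p, atVar i (g (σ i))) := by
      rw [← Finset.prod_mul_distrib, ← Finset.prod_mul_distrib]
      simp [map_mul]
    rw [hprod]
    push_cast
    ring
  rw [expand]
  rw [AddMonoidAlgebra.coeff_sum, Finsupp.finset_sum_apply]
  have inner0 : ∀ σ : Equiv.Perm (Fin p),
      (∑ τ : Equiv.Perm (Fin p),
          ((Equiv.Perm.sign σ * Equiv.Perm.sign τ : ℤ) :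
              AddMonoidAlgebra R (Fin p →₀ ℤ)) *
            ∏ i : Fin p, atVar i (φ * f (τ i) * g (σ i))).coeff (0 : Fin p →₀ ℤ)
      = ∑ τ : Equiv.Perm (Fin p),
          (((Equiv.Perm.sign σ * Equiv.Perm.sign τ : ℤ) :
              AddMonoidAlgebra R (Fin p →₀ ℤ)) *
            ∏ i : Fin p, atVar i (φ * f (τ i) * g (σ i))).coeff (0 : Fin p →₀ ℤ) := by
    intro σ
    rw [AddMonoidAlgebra.coeff_sum, Finsupp.finset_sum_apply]
  simp only [inner0]
  have coeff : ∀ (σ τ : Equiv.Perm (Fin p)),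
      (((Equiv.Perm.sign σ * Equiv.Perm.sign τ : ℤ) :
          AddMonoidAlgebra R (Fin p →₀ ℤ)) *
        ∏ i : Fin p, atVar i (φ * f (τ i) * g (σ i))).coeff (0 : Fin p →₀ ℤ)
      = ((Equiv.Perm.sign σ * Equiv.Perm.sign τ : ℤ) : R) *
        ∏ i : Fin p, (φ * f (τ i) * g (σ i)).coeff (0 : ℤ) := by
    intro σ τ
    rw [AddMonoidAlgebra.intCast_def, AddMonoidAlgebra.coeff_single_zero_mul,
      prod_atVar_apply_zero]
  simp only [coeff]
  have inner : ∀ σ : Equiv.Perm (Fin p),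
      (∑ τ : Equiv.Perm (Fin p), ((Equiv.Perm.sign σ * Equiv.Perm.sign τ : ℤ) : R) *
        ∏ i : Fin p, (φ * f (τ i) * g (σ i)).coeff (0 : ℤ))
      = Matrix.det (Matrix.of fun ℓ m : Fin p => (φ * f ℓ * g m).coeff (0 : ℤ)) := by
    intro σ
    rw [Matrix.det_apply']
    refine Fintype.sum_equiv (Equiv.mulRight σ⁻¹) _ _ ?_
    intro τ
    have hsign : ((Equiv.Perm.sign (τ * σ⁻¹) : ℤ) : R)
        = ((Equiv.Perm.sign σ * Equiv.Perm.sign τ : ℤ) : R) := by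
      simp only [Equiv.Perm.sign_mul, Equiv.Perm.sign_inv]
      push_cast
      ring
    have hprod : ∏ i : Fin p,
          (Matrix.of fun ℓ m : Fin p => (φ * f ℓ * g m).coeff (0 : ℤ)) ((τ * σ⁻¹) i) i
        = ∏ i : Fin p, (φ * f (τ i) * g (σ i)).coeff (0 : ℤ) := by
      rw [← Equiv.prod_comp σ (fun i =>
        (Matrix.of fun ℓ m : Fin p => (φ * f ℓ * g m).coeff (0 : ℤ)) ((τ * σ⁻¹) i) i)]
      refine Finset.prod_congr rfl fun i _ => ?_
      simp [Equiv.Perm.mul_apply]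
    simp only [Equiv.coe_mulRight]
    rw [hsign, hprod]
  simp only [inner]
  rw [Finset.sum_const, nsmul_eq_mul]
  congr 1
  simp [Fintype.card_perm]
end
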